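/- arXiv:1206.0992 — 5 statements merged into one kernel-verified Lean document; each statement's English description precedes it below -/
import Mathlib

section
/- Let n ≥ 1 be an integer. There exist an integer t ≥ 1 and matrices P_0, …, P_{t−1} ∈ 𝓜_n such that the product P_{t−1}⋯P_0 has rank 1 if and only if n is a power of two, i.e., n = 2^m for some integer m ≥ 0. -/
open Matrix

set_option linter.unusedSectionVars false

/-- The symmetric gossip matrix `M_{ij} = I - (e_i - e_j)(e_i - e_j)^T / 2`. -/
noncomputable def gossipM (n : ℕ) (i j : Fin n) : Matrix (Fin n) (Fin n) ℝ :=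
  1 - (1 / 2 : ℝ) • vecMulVec (Pi.single i 1 - Pi.single j 1) (Pi.single i 1 - Pi.single j 1)

section Aux

variable {ι κ : Type*} [Fintype ι] [DecidableEq ι] [Fintype κ] [DecidableEq κ]

noncomputable def gg (ι : Type*) [Fintype ι] [DecidableEq ι] (i j : ι) : Matrix ι ι ℝ :=
  1 - (1 / 2 : ℝ) • vecMulVec (Pi.single i 1 - Pi.single j 1) (Pi.single i 1 - Pi.single j 1)

lemma gg_apply (i j a b : ι) : gg ι i j a b =
    (if a = b then 1 else 0) - (1/2 : ℝ) *
      (((if a = i then 1 else 0) - (if a = j then 1 else 0)) *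
       ((if b = i then 1 else 0) - (if b = j then 1 else 0))) := by
  simp [gg, vecMulVec_apply, one_apply, Pi.single_apply, Matrix.sub_apply]

lemma gg_self (i : ι) : gg ι i i = 1 := by
  ext a b
  simp [gg_apply, one_apply]

lemma gg_mulVec_ones (i j : ι) : gg ι i j *ᵥ (fun _ => (1:ℝ)) = fun _ => 1 := by
  ext a
  simp only [mulVec, dotProduct, gg_apply, mul_one]
  rw [Finset.sum_sub_distrib, ← Finset.mul_sum, ← Finset.mul_sum, Finset.sum_sub_distrib]
  simp

lemma gg_vecMul_ones (i j : ι) : (fun _ => (1:ℝ)) ᵥ* gg ι i j = fun _ => 1 := by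
  ext b
  simp only [vecMul, dotProduct, gg_apply, one_mul]
  rw [Finset.sum_sub_distrib]
  have : ∀ a : ι, (1/2 : ℝ) * (((if a = i then 1 else 0) - (if a = j then 1 else 0)) *
       ((if b = i then 1 else 0) - (if b = j then 1 else 0))) =
      ((1/2 : ℝ) * ((if b = i then (1:ℝ) else 0) - (if b = j then 1 else 0))) *
      (((if a = i then (1:ℝ) else 0) - (if a = j then 1 else 0))) := by
    intro a; ring
  rw [Finset.sum_congr rfl (fun a _ => this a), ← Finset.mul_sum, Finset.sum_sub_distrib]
  simp


def dyadic : Subring ℝ where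
  carrier := {x | ∃ (k : ℕ) (a : ℤ), x * 2^k = a}
  zero_mem' := ⟨0, 0, by norm_num⟩
  one_mem' := ⟨0, 1, by norm_num⟩
  add_mem' := by
    rintro x y ⟨k, a, ha⟩ ⟨l, b, hb⟩
    exact ⟨k + l, a * 2^l + b * 2^k, by push_cast; rw [pow_add]; rw [← ha, ← hb]; ring⟩
  mul_mem' := by
    rintro x y ⟨k, a, ha⟩ ⟨l, b, hb⟩
    exact ⟨k + l, a * b, by push_cast; rw [pow_add]; rw [← ha, ← hb]; ring⟩
  neg_mem' := by
    rintro x ⟨k, a, ha⟩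
    exact ⟨k, -a, by push_cast; linarith [ha]⟩

lemma half_mem_dyadic : (1/2 : ℝ) ∈ dyadic := ⟨1, 1, by norm_num⟩

lemma ite_mem_dyadic {p : Prop} [Decidable p] : (if p then (1:ℝ) else 0) ∈ dyadic := by
  split_ifs
  · exact one_mem _
  · exact zero_mem _

lemma inv_nat_dyadic {n : ℕ} (hn : 1 ≤ n) (h : ((n : ℝ))⁻¹ ∈ dyadic) : ∃ m, n = 2 ^ m := by
  obtain ⟨k, a, ha⟩ := h
  have hn0 : (n : ℝ) ≠ 0 := by positivity
  have h2 : ((a * n : ℤ) : ℝ) = ((2^k : ℤ) : ℝ) := by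
    push_cast
    field_simp at ha ⊢
    nlinarith [ha]
  have h3 : a * (n : ℤ) = 2^k := by exact_mod_cast h2
  have h4 : (n : ℤ) ∣ 2^k := Dvd.intro_left a h3
  have h5 : n ∣ 2^k := by exact_mod_cast h4
  obtain ⟨m, -, hm⟩ := (Nat.dvd_prime_pow Nat.prime_two).mp h5
  exact ⟨m, hm⟩


lemma prod_mulVec_ones (L : List (Matrix ι ι ℝ))
    (h : ∀ A ∈ L, A *ᵥ (fun _ => (1:ℝ)) = fun _ => 1) :
    L.prod *ᵥ (fun _ => (1:ℝ)) = fun _ => 1 := by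
  induction L with
  | nil => simp [one_mulVec]
  | cons A L ih =>
    rw [List.prod_cons, ← mulVec_mulVec, ih (fun B hB => h B (.tail _ hB)), h A (.head _)]

lemma prod_vecMul_ones (L : List (Matrix ι ι ℝ))
    (h : ∀ A ∈ L, (fun _ => (1:ℝ)) ᵥ* A = fun _ => 1) :
    (fun _ => (1:ℝ)) ᵥ* L.prod = fun _ => 1 := by
  induction L with
  | nil => simp [vecMul_one]
  | cons A L ih =>
    rw [List.prod_cons, ← vecMul_vecMul, h A (.head _), ih (fun B hB => h B (.tail _ hB))]

lemma rank_one_const [Nonempty ι] {Q : Matrix ι ι ℝ} (h1 : Q.rank = 1)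
    (hr : Q *ᵥ (fun _ => (1:ℝ)) = fun _ => 1) (hc : (fun _ => (1:ℝ)) ᵥ* Q = fun _ => 1) :
    ∀ a b, Q a b = (Fintype.card ι : ℝ)⁻¹ := by
  have hones : ((fun _ => (1:ℝ)) : ι → ℝ) ≠ 0 := by
    intro h
    have := congrFun h (Classical.arbitrary ι)
    norm_num at this
  have h1' : Module.finrank ℝ (LinearMap.range Q.mulVecLin) = 1 := h1
  have hle : (ℝ ∙ ((fun _ => (1:ℝ)) : ι → ℝ)) ≤ LinearMap.range Q.mulVecLin := by
    rw [Submodule.span_singleton_le_iff_mem]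
    exact ⟨_, by simpa [mulVecLin_apply] using hr⟩
  have heq : (ℝ ∙ ((fun _ => (1:ℝ)) : ι → ℝ)) = LinearMap.range Q.mulVecLin :=
    Submodule.eq_of_le_of_finrank_eq hle (by rw [finrank_span_singleton hones, h1'])
  intro a b
  have hcol : Qᵀ b ∈ (ℝ ∙ ((fun _ => (1:ℝ)) : ι → ℝ)) := by
    rw [heq]
    exact ⟨Pi.single b 1, by rw [mulVecLin_apply, mulVec_single_one]; rfl⟩
  obtain ⟨c, hc'⟩ := Submodule.mem_span_singleton.mp hcol
  have hQab : ∀ x, Q x b = c := by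
    intro x
    have := congrFun hc' x
    simpa [transpose_apply] using this.symm
  have hsum : ∑ x, Q x b = 1 := by
    have := congrFun hc b
    simpa [vecMul, dotProduct] using this
  have hcard : ((Fintype.card ι : ℝ)) * c = 1 := by
    rw [← hsum]
    simp [hQab, Finset.sum_const, nsmul_eq_mul]
  have hc0 : (Fintype.card ι : ℝ) ≠ 0 := by
    simp [Fintype.card_ne_zero]
  rw [hQab a]
  field_simp
  linarith [hcard]

lemma rank_const [Nonempty ι] :
    (Matrix.of (fun _ _ => (Fintype.card ι : ℝ)⁻¹) : Matrix ι ι ℝ).rank = 1 := by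
  have hones : ((fun _ => (1:ℝ)) : ι → ℝ) ≠ 0 := by
    intro h
    have := congrFun h (Classical.arbitrary ι)
    norm_num at this
  have hc0 : (Fintype.card ι : ℝ) ≠ 0 := by simp [Fintype.card_ne_zero]
  have hQ : ∀ x : ι → ℝ, (Matrix.of (fun _ _ => (Fintype.card ι : ℝ)⁻¹) : Matrix ι ι ℝ) *ᵥ x
      = ((∑ b, x b) * (Fintype.card ι : ℝ)⁻¹) • ((fun _ => (1:ℝ)) : ι → ℝ) := by
    intro x
    ext a
    simp [mulVec, dotProduct, Finset.sum_mul, mul_comm]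
  have hr : LinearMap.range (Matrix.of (fun _ _ => (Fintype.card ι : ℝ)⁻¹) :
      Matrix ι ι ℝ).mulVecLin = ℝ ∙ ((fun _ => (1:ℝ)) : ι → ℝ) := by
    apply le_antisymm
    · rintro v ⟨x, rfl⟩
      rw [mulVecLin_apply, hQ]
      exact Submodule.smul_mem _ _ (Submodule.mem_span_singleton_self _)
    · rw [Submodule.span_singleton_le_iff_mem]
      refine ⟨fun _ => 1, ?_⟩
      rw [mulVecLin_apply, hQ]
      ext a
      simp
  unfold Matrix.rank
  rw [hr, finrank_span_singleton hones]

/-- product of a list of gossip matrices indexed by pairs -/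
noncomputable def ggProd (ι : Type*) [Fintype ι] [DecidableEq ι] (L : List (ι × ι)) :
    Matrix ι ι ℝ :=
  (L.map fun p => gg ι p.1 p.2).prod

def Good (ι : Type*) [Fintype ι] [DecidableEq ι] : Prop :=
  ∃ L : List (ι × ι), ggProd ι L = Matrix.of fun _ _ => (Fintype.card ι : ℝ)⁻¹

lemma gg_submatrix (e : κ ≃ ι) (i j : ι) :
    (gg ι i j).submatrix e e = gg κ (e.symm i) (e.symm j) := by
  ext a b
  simp only [submatrix_apply, gg_apply, EmbeddingLike.apply_eq_iff_eq,
    e.apply_eq_iff_eq_symm_apply, Equiv.symm_apply_apply]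

lemma good_transport (e : ι ≃ κ) (h : Good ι) : Good κ := by
  obtain ⟨L, hL⟩ := h
  refine ⟨L.map fun p => (e p.1, e p.2), ?_⟩
  have key : ∀ M : List (ι × ι), ggProd κ (M.map fun p => (e p.1, e p.2)) =
      (ggProd ι M).submatrix e.symm e.symm := by
    intro M
    induction M with
    | nil => simp [ggProd, submatrix_one_equiv]
    | cons p M ih =>
      simp only [ggProd, List.map_cons, List.prod_cons] at ih ⊢
      rw [ih]
      have := gg_submatrix e.symm p.1 p.2
      simp only [Equiv.symm_symm, Equiv.symm_apply_apply] at this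
      rw [← this, submatrix_mul_equiv]
  rw [key, hL]
  ext a b
  simp [Fintype.card_congr e]

lemma gg_block (i j : ι) (b : Fin 2) :
    gg (ι × Fin 2) (i, b) (j, b) =
      blockDiagonal (fun c => if c = b then gg ι i j else 1) := by
  ext ⟨x, c⟩ ⟨y, d⟩
  rw [blockDiagonal_apply']
  by_cases hcd : c = d
  · subst hcd
    by_cases hcb : c = b
    · subst hcb
      simp [gg_apply, Prod.ext_iff]
    · simp only [if_pos rfl, if_neg hcb, one_apply, gg_apply, Prod.ext_iff]
      have h1 : ¬(x = i ∧ c = b) := fun h => hcb h.2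
      have h2 : ¬(x = j ∧ c = b) := fun h => hcb h.2
      have h3 : ¬(y = i ∧ c = b) := fun h => hcb h.2
      have h4 : ¬(y = j ∧ c = b) := fun h => hcb h.2
      simp only [if_neg h1, if_neg h2, if_neg h3, if_neg h4]
      norm_num
  · rw [if_neg hcd]
    simp only [gg_apply, Prod.ext_iff]
    have h0 : ¬(x = y ∧ c = d) := fun h => hcd h.2
    rw [if_neg h0]
    rcases eq_or_ne c b with hcb | hcb
    · have hdb : ¬ d = b := fun h => hcd (hcb.trans h.symm)
      have h3 : ¬(y = i ∧ d = b) := fun h => hdb h.2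
      have h4 : ¬(y = j ∧ d = b) := fun h => hdb h.2
      rw [if_neg h3, if_neg h4]
      ring
    · have h1 : ¬(x = i ∧ c = b) := fun h => hcb h.2
      have h2 : ¬(x = j ∧ c = b) := fun h => hcb h.2
      rw [if_neg h1, if_neg h2]
      ring

lemma gg_pair_prod (i j : ι) :
    gg (ι × Fin 2) (i, 0) (j, 0) * gg (ι × Fin 2) (i, 1) (j, 1) =
      blockDiagonal (fun _ => gg ι i j) := by
  rw [gg_block, gg_block, ← blockDiagonal_mul]
  have : (fun c : Fin 2 => (if c = 0 then gg ι i j else 1) * if c = 1 then gg ι i j else 1)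
      = fun _ => gg ι i j := by
    funext c; fin_cases c <;> simp
  rw [this]

lemma lifted_prod (L : List (ι × ι)) :
    ggProd (ι × Fin 2)
        (L.flatMap fun p => [((p.1, 0), (p.2, 0)), ((p.1, 1), (p.2, 1))]) =
      blockDiagonal (fun _ => ggProd ι L) := by
  induction L with
  | nil =>
    simp only [ggProd, List.flatMap_nil, List.map_nil, List.prod_nil]
    rw [show (fun _ : Fin 2 => (1 : Matrix ι ι ℝ)) = (1 : Fin 2 → Matrix ι ι ℝ) from rfl,
      blockDiagonal_one]
  | cons p L ih =>
    simp only [ggProd, List.flatMap_cons, List.map_append, List.map_cons, List.prod_cons,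
      List.map_nil, List.nil_append, List.cons_append] at ih ⊢
    rw [← mul_assoc, gg_pair_prod, ih, ← blockDiagonal_mul]

lemma vecMulVec_mul' (u v : ι → ℝ) (B : Matrix ι ι ℝ) :
    vecMulVec u v * B = vecMulVec u (v ᵥ* B) := by
  ext a b
  simp [mul_apply, vecMulVec_apply, vecMul, dotProduct, Finset.mul_sum, mul_assoc]

noncomputable def mixF (s : List ι) : Matrix (ι × Fin 2) (ι × Fin 2) ℝ :=
  Matrix.of fun p q => if p.1 ∈ s then (if p.1 = q.1 then (1/2 : ℝ) else 0)
    else (if p = q then 1 else 0)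

lemma mixer_prod (s : List ι) (hs : s.Nodup) :
    ggProd (ι × Fin 2) (s.map fun i => ((i, 0), (i, 1))) = mixF s := by
  induction s with
  | nil => ext p q; simp [ggProd, mixF, one_apply]
  | cons i s ih =>
    obtain ⟨hi, hnd⟩ := List.nodup_cons.mp hs
    simp only [ggProd, List.map_cons, List.prod_cons] at ih ⊢
    rw [ih hnd]
    rw [gg, sub_mul, one_mul, smul_mul_assoc, vecMulVec_mul', sub_vecMul,
      single_one_vecMul, single_one_vecMul]
    ext ⟨x, c⟩ ⟨y, d⟩
    simp only [Matrix.sub_apply, Matrix.smul_apply, vecMulVec_apply, Pi.sub_apply, Pi.single_apply, Matrix.row_apply,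
      smul_eq_mul, mixF, of_apply, List.mem_cons]
    by_cases hx : x = i
    · subst hx
      simp only [hi, if_false, if_true, true_or, Prod.mk.injEq, Prod.ext_iff]
      by_cases hy : x = y
      · subst hy
        simp only [if_pos rfl, true_and]
        fin_cases c <;> fin_cases d <;> norm_num
      · simp only [hy, false_and, if_false, if_neg hy]
        fin_cases c <;> fin_cases d <;> norm_num
    · have h1 : ¬((x, c) = ((i, (0 : Fin 2)))) := fun h => hx (congrArg Prod.fst h)
      have h2 : ¬((x, c) = ((i, (1 : Fin 2)))) := fun h => hx (congrArg Prod.fst h)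
      simp only [if_neg h1, if_neg h2, hx, false_or]
      ring

lemma good_step (h : Good ι) : Good (ι × Fin 2) := by
  obtain ⟨L, hL⟩ := h
  refine ⟨((Finset.univ : Finset ι).toList.map fun i => ((i, 0), (i, 1))) ++
    (L.flatMap fun p => [((p.1, 0), (p.2, 0)), ((p.1, 1), (p.2, 1))]), ?_⟩
  have happ : ∀ A B : List ((ι × Fin 2) × (ι × Fin 2)),
      ggProd (ι × Fin 2) (A ++ B) = ggProd (ι × Fin 2) A * ggProd (ι × Fin 2) B := by
    intro A B
    simp [ggProd, List.map_append, List.prod_append]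
  rw [happ, mixer_prod _ (Finset.nodup_toList _), lifted_prod, hL]
  ext ⟨x, c⟩ ⟨y, d⟩
  simp only [mul_apply, mixF, of_apply, blockDiagonal_apply, Fintype.sum_prod_type,
    Finset.mem_toList, Finset.mem_univ, if_true]
  rw [Finset.sum_comm]
  have : ∀ e : Fin 2, ∑ z : ι, (if x = z then (1/2 : ℝ) else 0) *
      (if e = d then (Fintype.card ι : ℝ)⁻¹ else 0) =
      (if e = d then (1/2 : ℝ) * (Fintype.card ι : ℝ)⁻¹ else 0) := by
    intro e
    rw [← Finset.sum_mul]
    simp [Finset.sum_ite_eq]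
  rw [Finset.sum_congr rfl fun e _ => this e]
  simp [Fintype.card_prod, mul_inv]

lemma good_pow2 : ∀ m : ℕ, Good (Fin (2 ^ m)) := by
  intro m
  induction m with
  | zero =>
    refine ⟨[], ?_⟩
    ext a b
    have hab : a = b := by
      have ha := a.isLt
      have hb := b.isLt
      norm_num at ha hb
      ext
      omega
    simp [ggProd, one_apply, hab]
  | succ m ih =>
    exact good_transport (finProdFinEquiv.trans (finCongr (pow_succ 2 m).symm)) (good_step ih)


lemma gg_entry_dyadic (i j a b : ι) : gg ι i j a b ∈ dyadic := by
  rw [gg_apply]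
  exact sub_mem ite_mem_dyadic (mul_mem half_mem_dyadic (mul_mem
    (sub_mem ite_mem_dyadic ite_mem_dyadic) (sub_mem ite_mem_dyadic ite_mem_dyadic)))

lemma prod_entries_dyadic (L : List (Matrix ι ι ℝ)) (h : ∀ A ∈ L, ∀ a b, A a b ∈ dyadic) :
    ∀ a b, L.prod a b ∈ dyadic := by
  induction L with
  | nil =>
    intro a b
    rw [List.prod_nil, one_apply]
    exact ite_mem_dyadic
  | cons A L ih =>
    intro a b
    rw [List.prod_cons, mul_apply]
    exact Subring.sum_mem _ fun c _ =>
      mul_mem (h A (.head _) a c) (ih (fun B hB => h B (.tail _ hB)) c b)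

end Aux

lemma gossipM_eq_gg (n : ℕ) (i j : Fin n) : gossipM n i j = gg (Fin n) i j := rfl

theorem stmt_0 (n : ℕ) (hn : 1 ≤ n) :
    (∃ t : ℕ, 1 ≤ t ∧ ∃ P : Fin t → Matrix (Fin n) (Fin n) ℝ,
        (∀ k, ∃ i j, P k = gossipM n i j) ∧
        ((List.ofFn P).reverse.prod).rank = 1) ↔
      ∃ m : ℕ, n = 2 ^ m := by
  haveI : Nonempty (Fin n) := ⟨⟨0, hn⟩⟩
  constructor
  · rintro ⟨t, ht, P, hP, hrank⟩
    set L := (List.ofFn P).reverse with hLdef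
    have hmem : ∀ A ∈ L, ∃ i j, A = gg (Fin n) i j := by
      intro A hA
      rw [hLdef, List.mem_reverse, List.mem_ofFn] at hA
      obtain ⟨k, rfl⟩ := hA
      obtain ⟨i, j, hij⟩ := hP k
      exact ⟨i, j, hij⟩
    have hr : L.prod *ᵥ (fun _ => (1:ℝ)) = fun _ => 1 := by
      refine prod_mulVec_ones L fun A hA => ?_
      obtain ⟨i, j, rfl⟩ := hmem A hA
      exact gg_mulVec_ones i j
    have hc : (fun _ => (1:ℝ)) ᵥ* L.prod = fun _ => 1 := by
      refine prod_vecMul_ones L fun A hA => ?_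
      obtain ⟨i, j, rfl⟩ := hmem A hA
      exact gg_vecMul_ones i j
    have hconst := rank_one_const hrank hr hc
    have hd : L.prod ⟨0, hn⟩ ⟨0, hn⟩ ∈ dyadic := by
      refine prod_entries_dyadic L (fun A hA a b => ?_) _ _
      obtain ⟨i, j, rfl⟩ := hmem A hA
      exact gg_entry_dyadic i j a b
    rw [hconst ⟨0, hn⟩ ⟨0, hn⟩, Fintype.card_fin] at hd
    exact inv_nat_dyadic hn hd
  · rintro ⟨m, rfl⟩
    obtain ⟨L, hL⟩ := good_pow2 m
    set i0 : Fin (2 ^ m) := ⟨0, hn⟩ with hi0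
    set L' : List (Fin (2 ^ m) × Fin (2 ^ m)) := L ++ [(i0, i0)] with hL'
    have hprod : ggProd (Fin (2 ^ m)) L' = Matrix.of fun _ _ => (Fintype.card (Fin (2 ^ m)) : ℝ)⁻¹ := by
      rw [hL']
      show ((L ++ [(i0, i0)]).map fun p => gg (Fin (2^m)) p.1 p.2).prod = _
      rw [List.map_append, List.prod_append]
      show ggProd (Fin (2^m)) L * _ = _
      simp [hL, gg_self]
    set ML : List (Matrix (Fin (2^m)) (Fin (2^m)) ℝ) := L'.map fun p => gossipM (2^m) p.1 p.2
      with hML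
    refine ⟨ML.reverse.length, ?_, ML.reverse.get, ?_, ?_⟩
    · simp [hML, hL']
    · intro k
      have hall : ∀ A ∈ ML, ∃ i j, A = gossipM (2 ^ m) i j := by
        intro A hA
        rw [hML, List.mem_map] at hA
        obtain ⟨p, -, hp⟩ := hA
        exact ⟨p.1, p.2, hp.symm⟩
      exact hall _ (List.mem_reverse.mp (List.get_mem _ k))
    · rw [List.ofFn_get, List.reverse_reverse]
      have : ML.prod = ggProd (Fin (2^m)) L' := rfl
      rw [this, hprod]
      exact rank_const
end

section
/- Let n = 2^m with m ≥ 0 an integer. Then the minimum, over all integers t ≥ 1 and all P_0, …, P_{t−1} ∈ 𝓜_n with rank(P_{t−1}⋯P_0) = 1, of the number of node updates Σ_{k=0}^{t−1} ‖I_n − P_k‖_1 equals m·n. -/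
open Matrix

lemma gossipM_mul_apply {n : ℕ} (i j : Fin n) (A : Matrix (Fin n) (Fin n) ℝ) (x y : Fin n) :
    (gossipM n i j * A) x y = if x = i ∨ x = j then (A i y + A j y) / 2 else A x y := by
  set u : Fin n → ℝ := Pi.single i 1 - Pi.single j 1 with hu_def
  have hu : ∀ z : Fin n, u z = (if z = i then (1:ℝ) else 0) - (if z = j then 1 else 0) := by
    intro z; simp [hu_def, Pi.single_apply]
  have hsum : ∀ w, (∑ z, u z * A z w) = A i w - A j w := by
    intro w
    have : ∀ z, u z * A z w = (if z = i then A i w else 0) - (if z = j then A j w else 0) := by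
      intro z; rw [hu]
      rcases eq_or_ne z i with rfl|h1 <;> rcases eq_or_ne z j with rfl|h2 <;> simp [*] <;> ring
    simp [this, Finset.sum_sub_distrib]
  have key : (gossipM n i j * A) x y = A x y - (1/2) * (u x * (A i y - A j y)) := by
    rw [gossipM, ← hu_def, Matrix.sub_mul, Matrix.one_mul, Matrix.sub_apply,
      Matrix.smul_mul, Matrix.smul_apply]
    congr 1
    rw [smul_eq_mul]
    congr 1
    rw [mul_apply]
    simp only [vecMulVec_apply]
    rw [← hsum y, Finset.mul_sum]
    congr 1; ext z; ring
  rw [key]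
  rcases eq_or_ne x i with rfl | hxi
  · rcases eq_or_ne x j with rfl | hxj
    · simp [hu]
      try ring
    · simp [hu, hxj]; ring
  · rcases eq_or_ne x j with rfl | hxj
    · simp [hu, hxi]; ring
    · simp [hu, hxi, hxj]

lemma gossipM_cost {n : ℕ} (i j : Fin n) :
    (∑ x, ∑ y, |(1 - gossipM n i j) x y|) = if i = j then 0 else 2 := by
  set u : Fin n → ℝ := Pi.single i 1 - Pi.single j 1 with hu_def
  have h1 : ∀ x y, (1 - gossipM n i j) x y = (1/2) * (u x * u y) := by
    intro x y
    simp [gossipM, ← hu_def, Matrix.sub_apply, Matrix.smul_apply, vecMulVec_apply, smul_eq_mul]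
  have h2 : (∑ x, ∑ y, |(1 - gossipM n i j) x y|) = (1/2) * (∑ x, |u x|) * (∑ y, |u y|) := by
    simp only [h1, abs_mul, abs_of_nonneg (show (0:ℝ) ≤ 1/2 by norm_num)]
    rw [mul_assoc, Finset.sum_mul_sum, Finset.mul_sum]
    congr 1; ext x
    rw [Finset.mul_sum]
  have h3 : (∑ x, |u x|) = if i = j then 0 else 2 := by
    rcases eq_or_ne i j with rfl | hij
    · simp [hu_def]
    · have : ∀ z, |u z| = (if z = i then (1:ℝ) else 0) + (if z = j then 1 else 0) := by
        intro z
        simp only [hu_def, Pi.sub_apply, Pi.single_apply]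
        rcases eq_or_ne z i with rfl|h1 <;> rcases eq_or_ne z j with rfl|h2 <;>
          simp [*] at * <;> simp [abs_of_nonneg]
      simp [this, Finset.sum_add_distrib, hij]
      norm_num
  rw [h2, h3]
  rcases eq_or_ne i j with rfl | hij <;> simp [*] <;> norm_num

lemma nml_avg {a b : ℝ} (ha : 0 ≤ a) (hb : 0 ≤ b) :
    Real.negMulLog ((a + b) / 2) ≤
      (Real.negMulLog a + Real.negMulLog b) / 2 + ((a + b) / 2) * Real.log 2 := by
  rcases eq_or_lt_of_le (add_nonneg ha hb) with h0 | hpos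
  · have ha0 : a = 0 := by linarith [ha, hb, h0.symm]
    have hb0 : b = 0 := by linarith
    simp [ha0, hb0, Real.negMulLog_zero]
  · have hne : a + b ≠ 0 := ne_of_gt hpos
    have hlog : Real.log ((a + b) / 2) = Real.log (a + b) - Real.log 2 := by
      rw [Real.log_div hne (by norm_num)]
    have key : ∀ c : ℝ, 0 ≤ c → c ≤ a + b → c * Real.log c ≤ c * Real.log (a + b) := by
      intro c hc hcab
      rcases eq_or_lt_of_le hc with rfl | hc'
      · simp
      · exact mul_le_mul_of_nonneg_left (Real.log_le_log hc' hcab) hc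
    have h1 := key a ha (by linarith)
    have h2 := key b hb (by linarith)
    simp only [Real.negMulLog, hlog]
    ring_nf
    nlinarith [h1, h2]

noncomputable def gPhi {n : ℕ} (A : Matrix (Fin n) (Fin n) ℝ) : ℝ :=
  ∑ x, ∑ y, Real.negMulLog (A x y)

lemma gossipM_eq_one {n : ℕ} (i : Fin n) : gossipM n i i = 1 := by
  unfold gossipM
  rw [sub_self]
  have : vecMulVec (0 : Fin n → ℝ) 0 = (0 : Matrix (Fin n) (Fin n) ℝ) := by
    ext x y; simp [vecMulVec_apply]
  rw [this, smul_zero, sub_zero]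

lemma step_phi {n : ℕ} (i j : Fin n) (A : Matrix (Fin n) (Fin n) ℝ)
    (hA1 : ∀ x y, 0 ≤ A x y) (hA2 : ∀ x, (∑ y, A x y) = 1) :
    gPhi (gossipM n i j * A) ≤ gPhi A + (∑ x, ∑ y, |(1 - gossipM n i j) x y|) * Real.log 2 := by
  rcases eq_or_ne i j with rfl | hij
  · have h1 : gossipM n i i * A = A := by rw [gossipM_eq_one, Matrix.one_mul]
    have h2 := gossipM_cost i i
    rw [if_pos rfl] at h2
    rw [h1, h2]
    simp
  · rw [gossipM_cost, if_neg hij]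
    -- difference supported on rows i, j
    have hrow : ∀ x y, (gossipM n i j * A) x y = if x = i ∨ x = j then (A i y + A j y)/2 else A x y :=
      gossipM_mul_apply i j A
    set F : Fin n → ℝ := fun x => ∑ y, Real.negMulLog ((gossipM n i j * A) x y) with hF
    set G : Fin n → ℝ := fun x => ∑ y, Real.negMulLog (A x y) with hG
    have hdiff : gPhi (gossipM n i j * A) - gPhi A = ∑ x, (F x - G x) := by
      rw [Finset.sum_sub_distrib]; rfl
    have hzero : ∀ x ∈ (Finset.univ : Finset (Fin n)), x ∉ ({i, j} : Finset (Fin n)) → F x - G x = 0 := by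
      intro x _ hx
      simp only [Finset.mem_insert, Finset.mem_singleton] at hx
      push_neg at hx
      have : F x = G x := by
        simp only [hF, hG]
        congr 1; ext y
        rw [hrow x y, if_neg (by tauto)]
      rw [this, sub_self]
    have hsub : (∑ x, (F x - G x)) = ∑ x ∈ ({i, j} : Finset (Fin n)), (F x - G x) :=
      (Finset.sum_subset (Finset.subset_univ _) hzero).symm
    have hpair : (∑ x ∈ ({i, j} : Finset (Fin n)), (F x - G x)) = (F i - G i) + (F j - G j) :=
      Finset.sum_pair hij
    have hFi : F i = ∑ y, Real.negMulLog ((A i y + A j y)/2) := by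
      simp only [hF]; congr 1; ext y; rw [hrow, if_pos (Or.inl rfl)]
    have hFj : F j = ∑ y, Real.negMulLog ((A i y + A j y)/2) := by
      simp only [hF]; congr 1; ext y; rw [hrow, if_pos (Or.inr rfl)]
    have hbound : (F i - G i) + (F j - G j) ≤ 2 * Real.log 2 := by
      rw [hFi, hFj]
      have hptw : ∀ y, Real.negMulLog ((A i y + A j y)/2) ≤
          (Real.negMulLog (A i y) + Real.negMulLog (A j y)) / 2 + ((A i y + A j y)/2) * Real.log 2 :=
        fun y => nml_avg (hA1 i y) (hA1 j y)
      have hsum := Finset.sum_le_sum (fun y (_ : y ∈ Finset.univ) => hptw y)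
      have hmass : (∑ y, ((A i y + A j y)/2)) = 1 := by
        have : (∑ y, ((A i y + A j y)/2)) = ((∑ y, A i y) + (∑ y, A j y))/2 := by
          rw [← Finset.sum_add_distrib, ← Finset.sum_div]
        rw [this, hA2 i, hA2 j]; norm_num
      have hG' : (∑ y, ((Real.negMulLog (A i y) + Real.negMulLog (A j y)) / 2 + ((A i y + A j y)/2) * Real.log 2))
          = (G i + G j)/2 + Real.log 2 := by
        rw [Finset.sum_add_distrib, ← Finset.sum_mul, hmass, one_mul]
        congr 1
        rw [← Finset.sum_div, Finset.sum_add_distrib]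
      rw [hG'] at hsum
      linarith [hsum]
    have e1 : gPhi (gossipM n i j * A) - gPhi A = (F i - G i) + (F j - G j) := by
      rw [hdiff, hsub, hpair]
    linarith [e1, hbound]

lemma sum_support_pair {n : ℕ} {i j : Fin n} (hij : i ≠ j) (g : Fin n → ℝ)
    (hg : ∀ x, x ≠ i → x ≠ j → g x = 0) : (∑ x, g x) = g i + g j := by
  have h1 : (∑ x, g x) = ∑ x ∈ ({i, j} : Finset (Fin n)), g x := by
    refine (Finset.sum_subset (Finset.subset_univ _) ?_).symm
    intro x _ hx
    simp only [Finset.mem_insert, Finset.mem_singleton] at hx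
    push_neg at hx
    exact hg x hx.1 hx.2
  rw [h1, Finset.sum_pair hij]

lemma list_inv {n : ℕ} (l : List (Matrix (Fin n) (Fin n) ℝ))
    (hl : ∀ Q ∈ l, ∃ i j, Q = gossipM n i j) :
    (∀ x y, 0 ≤ l.prod x y) ∧ (∀ x, (∑ y, l.prod x y) = 1) ∧ (∀ y, (∑ x, l.prod x y) = 1) ∧
      gPhi l.prod ≤ (l.map (fun Q => ∑ x, ∑ y, |(1 - Q) x y|)).sum * Real.log 2 := by
  induction l with
  | nil =>
    refine ⟨?_, ?_, ?_, ?_⟩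
    · intro x y
      simp [Matrix.one_apply]
      positivity
    · intro x; simp [Matrix.one_apply]
    · intro y; simp [Matrix.one_apply]
    · simp only [List.prod_nil, List.map_nil, List.sum_nil, zero_mul]
      have : gPhi (1 : Matrix (Fin n) (Fin n) ℝ) = 0 := by
        unfold gPhi
        rw [Finset.sum_eq_zero]
        intro x _
        rw [Finset.sum_eq_zero]
        intro y _
        rcases eq_or_ne x y with rfl | h
        · simp [Matrix.one_apply]
        · simp [Matrix.one_apply, h]
      rw [this]
  | cons Q l' ih =>
    obtain ⟨i, j, rfl⟩ := hl Q (List.mem_cons_self)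
    have hl' : ∀ R ∈ l', ∃ i j, R = gossipM n i j := fun R hR => hl R (List.mem_cons_of_mem _ hR)
    obtain ⟨ih1, ih2, ih3, ih4⟩ := ih hl'
    set A := l'.prod with hA
    rw [List.prod_cons]
    have hrow := gossipM_mul_apply i j A
    refine ⟨?_, ?_, ?_, ?_⟩
    · intro x y
      rw [hrow]
      split
      · have := ih1 i y; have := ih1 j y; positivity
      · exact ih1 x y
    · intro x
      rcases Classical.em (x = i ∨ x = j) with hx | hx
      · have : (∑ y, (gossipM n i j * A) x y) = ∑ y, (A i y + A j y)/2 := by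
          refine Finset.sum_congr rfl fun y _ => ?_
          rw [hrow, if_pos hx]
        rw [this, ← Finset.sum_div, Finset.sum_add_distrib, ih2 i, ih2 j]
        norm_num
      · have : (∑ y, (gossipM n i j * A) x y) = ∑ y, A x y := by
          refine Finset.sum_congr rfl fun y _ => ?_
          rw [hrow, if_neg hx]
        rw [this, ih2 x]
    · intro y
      rcases eq_or_ne i j with rfl | hij
      · have : gossipM n i i * A = A := by rw [gossipM_eq_one, Matrix.one_mul]
        rw [this, ih3 y]
      · have hdec : ∀ x, (gossipM n i j * A) x y
            = A x y + (if x = i ∨ x = j then (A i y + A j y)/2 - A x y else 0) := by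
          intro x
          rw [hrow]
          split
          · ring
          · ring
        have : (∑ x, (gossipM n i j * A) x y)
            = (∑ x, A x y) + ∑ x, (if x = i ∨ x = j then (A i y + A j y)/2 - A x y else 0) := by
          simp only [hdec]
          rw [Finset.sum_add_distrib]
        rw [this, ih3 y, sum_support_pair hij _ (fun x h1 h2 => by
          rw [if_neg]; tauto)]
        rw [if_pos (Or.inl rfl), if_pos (Or.inr rfl)]
        ring
    · have hstep := step_phi i j A ih1 ih2
      rw [List.map_cons, List.sum_cons, add_mul]
      linarith [ih4, hstep]

lemma rank_one_const_s1 {n : ℕ} (hn : 0 < n) (A : Matrix (Fin n) (Fin n) ℝ)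
    (h2 : ∀ x, (∑ y, A x y) = 1) (h3 : ∀ y, (∑ x, A x y) = 1) (hr : A.rank = 1) :
    ∀ x y, A x y = (n : ℝ)⁻¹ := by
  have hone : A.mulVecLin (fun _ => (1:ℝ)) = fun _ => (1:ℝ) := by
    funext x
    simp [Matrix.mulVecLin_apply, Matrix.mulVec, dotProduct, h2 x]
  have hone_ne : (fun _ => (1:ℝ)) ≠ (0 : Fin n → ℝ) := by
    intro h
    have := congrFun h ⟨0, hn⟩
    simp at this
  have hle : Submodule.span ℝ {(fun _ => (1:ℝ) : Fin n → ℝ)} ≤ LinearMap.range A.mulVecLin := by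
    rw [Submodule.span_le, Set.singleton_subset_iff]
    exact ⟨fun _ => 1, hone⟩
  have hspan_rank : Module.finrank ℝ (Submodule.span ℝ {(fun _ => (1:ℝ) : Fin n → ℝ)}) = 1 :=
    finrank_span_singleton hone_ne
  have heq : Submodule.span ℝ {(fun _ => (1:ℝ) : Fin n → ℝ)} = LinearMap.range A.mulVecLin := by
    apply Submodule.eq_of_le_of_finrank_le hle
    rw [hspan_rank]
    exact le_of_eq hr
  intro x y
  have hcol : A.mulVecLin (Pi.single y 1) ∈ LinearMap.range A.mulVecLin := ⟨_, rfl⟩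
  rw [← heq, Submodule.mem_span_singleton] at hcol
  obtain ⟨c, hc⟩ := hcol
  have hcol_eq : ∀ x', A x' y = c := by
    intro x'
    have := congrFun hc x'
    simp only [Pi.smul_apply, smul_eq_mul, mul_one] at this
    rw [this]
    simp [Matrix.mulVecLin_apply, Matrix.mulVec, dotProduct, Pi.single_apply]
  have hsum : (n : ℝ) * c = 1 := by
    have := h3 y
    rw [Finset.sum_congr rfl (fun x' _ => hcol_eq x')] at this
    simpa [Finset.sum_const, Finset.card_univ] using this
  have hcne : c = (n : ℝ)⁻¹ := by
    field_simp at hsum ⊢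
    linarith
  rw [hcol_eq x, hcne]

lemma rank_const_eq_one {n : ℕ} (hn : 0 < n) (A : Matrix (Fin n) (Fin n) ℝ)
    (hA : ∀ x y, A x y = (n : ℝ)⁻¹) : A.rank = 1 := by
  have hnR : (n : ℝ) ≠ 0 := Nat.cast_ne_zero.mpr hn.ne'
  have hrange : LinearMap.range A.mulVecLin = Submodule.span ℝ {(fun _ => (1:ℝ) : Fin n → ℝ)} := by
    apply le_antisymm
    · rintro v ⟨w, rfl⟩
      rw [Submodule.mem_span_singleton]
      refine ⟨(n:ℝ)⁻¹ * ∑ y, w y, ?_⟩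
      funext x
      simp only [Matrix.mulVecLin_apply, Matrix.mulVec, dotProduct, Pi.smul_apply, smul_eq_mul,
        mul_one, hA]
      rw [← Finset.mul_sum]
    · rw [Submodule.span_le, Set.singleton_subset_iff]
      refine ⟨fun _ => 1, ?_⟩
      funext x
      simp only [Matrix.mulVecLin_apply, Matrix.mulVec, dotProduct, mul_one, hA]
      rw [Finset.sum_const, Finset.card_univ]
      simp [hnR]
  rw [Matrix.rank, hrange]
  apply finrank_span_singleton
  intro h
  have := congrFun h ⟨0, hn⟩
  simp at this

lemma lower_bound (m n : ℕ) (hn : n = 2 ^ m) (c : ℝ)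
    (hc : ∃ t : ℕ, 1 ≤ t ∧ ∃ P : Fin t → Matrix (Fin n) (Fin n) ℝ,
          (∀ k, ∃ i j, P k = gossipM n i j) ∧
          ((List.ofFn P).reverse.prod).rank = 1 ∧
          c = ∑ k, ∑ i, ∑ j, |(1 - P k) i j|) :
    ((m * n : ℕ) : ℝ) ≤ c := by
  obtain ⟨t, ht, P, hP, hrank, hcost⟩ := hc
  have hnpos : 0 < n := hn ▸ Nat.pow_pos (a := 2) (n := m) (by norm_num)
  set l := (List.ofFn P).reverse with hl_def
  have hl : ∀ Q ∈ l, ∃ i j, Q = gossipM n i j := by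
    intro Q hQ
    rw [hl_def, List.mem_reverse, List.mem_ofFn] at hQ
    obtain ⟨k, hk⟩ := hQ
    exact hk ▸ hP k
  obtain ⟨h1, h2, h3, h4⟩ := list_inv l hl
  have hconst : ∀ x y, l.prod x y = (n : ℝ)⁻¹ := rank_one_const_s1 hnpos l.prod h2 h3 hrank
  have hPhi : gPhi l.prod = (n : ℝ) * ((m : ℝ) * Real.log 2) := by
    unfold gPhi
    rw [Finset.sum_congr rfl (fun x _ => Finset.sum_congr rfl (fun y _ => by rw [hconst x y]))]
    rw [Finset.sum_const, Finset.sum_const, Finset.card_univ, Fintype.card_fin,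
      nsmul_eq_mul, nsmul_eq_mul]
    have hnR : (0:ℝ) < (n : ℝ) := Nat.cast_pos.mpr hnpos
    have : Real.negMulLog ((n : ℝ)⁻¹) = (n:ℝ)⁻¹ * Real.log n := by
      rw [Real.negMulLog, Real.log_inv]
      ring
    rw [this]
    have hlogn : Real.log n = (m : ℝ) * Real.log 2 := by
      rw [hn]
      push_cast
      rw [Real.log_pow]
    rw [hlogn]
    field_simp
  have hsum : c = (l.map (fun Q => ∑ x, ∑ y, |(1 - Q) x y|)).sum := by
    rw [hcost, hl_def, List.map_reverse, List.sum_reverse, List.map_ofFn, List.sum_ofFn]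
    rfl
  have hlog2 : (0:ℝ) < Real.log 2 := Real.log_pos one_lt_two
  have := h4
  rw [hPhi, ← hsum] at this
  have hfinal : (n : ℝ) * (m : ℝ) ≤ c := by
    have := (mul_le_mul_iff_left₀ hlog2).mp (by linarith [this] : ((n:ℝ) * (m:ℝ)) * Real.log 2 ≤ c * Real.log 2)
    exact this
  push_cast
  linarith [hfinal]


/-- position of the `k`-th pair's first element in round `r` -/
def genc (r k : ℕ) : ℕ := (k / 2 ^ r) * 2 ^ (r + 1) + k % 2 ^ r

section arith
variable {m r k : ℕ}

lemma genc_eq (r k : ℕ) : genc r k = 2 ^ r * (2 * (k / 2 ^ r)) + k % 2 ^ r := by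
  unfold genc; ring

lemma genc_div (r k : ℕ) : genc r k / 2 ^ r = 2 * (k / 2 ^ r) := by
  rw [genc_eq, Nat.mul_add_div (Nat.pow_pos (a := 2) (n := r) (by norm_num)),
    Nat.div_eq_of_lt (Nat.mod_lt _ (Nat.pow_pos (a := 2) (n := r) (by norm_num))), add_zero]

lemma genc_mod (r k : ℕ) : genc r k % 2 ^ r = k % 2 ^ r := by
  rw [genc_eq, Nat.mul_add_mod]
  exact Nat.mod_mod_of_dvd _ dvd_rfl

lemma genc_add_div (r k : ℕ) : (genc r k + 2 ^ r) / 2 ^ r = 2 * (k / 2 ^ r) + 1 := by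
  have h : genc r k + 2 ^ r = 2 ^ r * (2 * (k / 2 ^ r) + 1) + k % 2 ^ r := by
    rw [genc_eq]; ring
  rw [h, Nat.mul_add_div (Nat.pow_pos (a := 2) (n := r) (by norm_num)),
    Nat.div_eq_of_lt (Nat.mod_lt _ (Nat.pow_pos (a := 2) (n := r) (by norm_num))), add_zero]

lemma genc_add_mod (r k : ℕ) : (genc r k + 2 ^ r) % 2 ^ r = k % 2 ^ r := by
  have h : genc r k + 2 ^ r = 2 ^ r * (2 * (k / 2 ^ r) + 1) + k % 2 ^ r := by
    rw [genc_eq]; ring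
  rw [h, Nat.mul_add_mod]
  exact Nat.mod_mod_of_dvd _ dvd_rfl

lemma genc_add_lt (hr : r < m) (hk : k < 2 ^ (m - 1)) : genc r k + 2 ^ r < 2 ^ m := by
  have hq : k / 2 ^ r < 2 ^ (m - 1 - r) := by
    rw [Nat.div_lt_iff_lt_mul (Nat.pow_pos (a := 2) (n := r) (by norm_num))]
    calc k < 2 ^ (m - 1) := hk
    _ = 2 ^ (m - 1 - r) * 2 ^ r := by rw [← pow_add]; congr 1; omega
  have key : genc r k + 2 ^ r < (k / 2 ^ r + 1) * 2 ^ (r + 1) := by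
    have := Nat.mod_lt k (y := 2 ^ r) (Nat.pow_pos (a := 2) (n := r) (by norm_num))
    have h2 : (2:ℕ) ^ (r+1) = 2 * 2 ^ r := by rw [pow_succ]; ring
    unfold genc
    rw [add_mul, one_mul, h2]
    omega
  calc genc r k + 2 ^ r < (k / 2 ^ r + 1) * 2 ^ (r + 1) := key
    _ ≤ 2 ^ (m - 1 - r) * 2 ^ (r + 1) := Nat.mul_le_mul (by omega) (le_refl _)
    _ = 2 ^ m := by rw [← pow_add]; congr 1; omega

lemma genc_lt (hr : r < m) (hk : k < 2 ^ (m - 1)) : genc r k < 2 ^ m :=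
  lt_of_le_of_lt (Nat.le_add_right _ _) (genc_add_lt hr hk)

lemma genc_inj (r : ℕ) {k1 k2 : ℕ} (h : genc r k1 = genc r k2) : k1 = k2 := by
  have h1 := genc_div r k1
  have h2 := genc_div r k2
  have h3 := genc_mod r k1
  have h4 := genc_mod r k2
  rw [h] at h1 h3
  have e1 : k1 / 2 ^ r = k2 / 2 ^ r := by omega
  have e2 : k1 % 2 ^ r = k2 % 2 ^ r := by omega
  have d1 := Nat.div_add_mod k1 (2 ^ r)
  have d2 := Nat.div_add_mod k2 (2 ^ r)
  rw [e1, e2] at d1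
  omega

lemma genc_cover (hr : r < m) {x : ℕ} (hx : x < 2 ^ m) :
    ∃ k < 2 ^ (m - 1), x = genc r k ∨ x = genc r k + 2 ^ r := by
  have hP : (0:ℕ) < 2 ^ r := Nat.pow_pos (a := 2) (n := r) (by norm_num)
  set Q := x / 2 ^ r with hQ
  set s := x % 2 ^ r with hs
  have hdm : 2 ^ r * Q + s = x := Nat.div_add_mod x (2 ^ r)
  have hslt : s < 2 ^ r := Nat.mod_lt x hP
  have hQlt : Q < 2 ^ (m - r) := by
    rw [hQ, Nat.div_lt_iff_lt_mul hP]
    calc x < 2 ^ m := hx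
    _ = 2 ^ (m - r) * 2 ^ r := by rw [← pow_add]; congr 1; omega
  set q := Q / 2 with hq
  have hQ2 : Q = 2 * q + Q % 2 := by omega
  have hqlt : q < 2 ^ (m - 1 - r) := by
    have : (2:ℕ) ^ (m - r) = 2 * 2 ^ (m - 1 - r) := by
      rw [← pow_succ']; congr 1; omega
    omega
  refine ⟨q * 2 ^ r + s, ?_, ?_⟩
  · calc q * 2 ^ r + s < q * 2 ^ r + 2 ^ r := by omega
    _ = (q + 1) * 2 ^ r := by ring
    _ ≤ 2 ^ (m - 1 - r) * 2 ^ r := Nat.mul_le_mul (by omega) (le_refl _)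
    _ = 2 ^ (m - 1) := by rw [← pow_add]; congr 1; omega
  · have hdiv : (q * 2 ^ r + s) / 2 ^ r = q := by
      rw [mul_comm, Nat.mul_add_div hP, Nat.div_eq_of_lt hslt, add_zero]
    have hmod : (q * 2 ^ r + s) % 2 ^ r = s := by
      rw [mul_comm, Nat.mul_add_mod, Nat.mod_eq_of_lt hslt]
    have hgenc : genc r (q * 2 ^ r + s) = q * 2 ^ (r + 1) + s := by
      unfold genc; rw [hdiv, hmod]
    have hp2 : (2:ℕ) ^ (r + 1) = 2 * 2 ^ r := by rw [pow_succ]; ring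
    rcases Nat.even_or_odd Q with he | ho
    · left
      rw [hgenc, hp2]
      have : Q % 2 = 0 := Nat.even_iff.mp he
      nlinarith [hdm, hQ2, this]
    · right
      rw [hgenc, hp2]
      have : Q % 2 = 1 := Nat.odd_iff.mp ho
      nlinarith [hdm, hQ2, this]
end arith

noncomputable section construction

def gKf (r a b : ℕ) : ℝ := if a / 2 ^ r = b / 2 ^ r then ((2:ℝ) ^ r)⁻¹ else 0

lemma pow_pos2 (m : ℕ) : 0 < 2 ^ m := Nat.pow_pos (a := 2) (n := m) (by norm_num)

def fenc (m r k : ℕ) : Fin (2 ^ m) := ⟨genc r k % 2 ^ m, Nat.mod_lt _ (pow_pos2 m)⟩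
def fenc2 (m r k : ℕ) : Fin (2 ^ m) := ⟨(genc r k + 2 ^ r) % 2 ^ m, Nat.mod_lt _ (pow_pos2 m)⟩

lemma fenc_val {m r k : ℕ} (hr : r < m) (hk : k < 2 ^ (m - 1)) :
    (fenc m r k : ℕ) = genc r k := Nat.mod_eq_of_lt (genc_lt hr hk)

lemma fenc2_val {m r k : ℕ} (hr : r < m) (hk : k < 2 ^ (m - 1)) :
    (fenc2 m r k : ℕ) = genc r k + 2 ^ r := Nat.mod_eq_of_lt (genc_add_lt hr hk)

def gK (m r : ℕ) : Matrix (Fin (2 ^ m)) (Fin (2 ^ m)) ℝ :=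
  Matrix.of fun x y => gKf r (x : ℕ) (y : ℕ)

lemma gK_apply (m r : ℕ) (x y : Fin (2 ^ m)) : gK m r x y = gKf r (x : ℕ) (y : ℕ) := rfl

/-- the key averaging identity. -/
lemma gKf_avg {r k : ℕ} {a : ℕ} (ha : a = genc r k ∨ a = genc r k + 2 ^ r) (c : ℕ) :
    (gKf r (genc r k) c + gKf r (genc r k + 2 ^ r) c) / 2 = gKf (r + 1) a c := by
  have hd1 : genc r k / 2 ^ r = 2 * (k / 2 ^ r) := genc_div r k
  have hd2 : (genc r k + 2 ^ r) / 2 ^ r = 2 * (k / 2 ^ r) + 1 := genc_add_div r k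
  have hdd : ∀ z : ℕ, z / 2 ^ (r + 1) = z / 2 ^ r / 2 := by
    intro z
    rw [Nat.div_div_eq_div_mul, pow_succ]
  have haq : a / 2 ^ (r + 1) = k / 2 ^ r := by
    rcases ha with rfl | rfl <;> rw [hdd] <;> omega
  have hval : ((2:ℝ) ^ (r+1))⁻¹ = ((2:ℝ) ^ r)⁻¹ / 2 := by
    rw [pow_succ]
    field_simp
  unfold gKf
  rw [hd1, hd2, haq, hdd c]
  split_ifs with h1 h2 h3 h2 h3 h3 <;> first
    | (exfalso; omega)
    | (rw [hval]; ring)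
    | norm_num

lemma round_partial (m r : ℕ) (hr : r < m) (s : List ℕ) (hnd : s.Nodup)
    (hmem : ∀ k ∈ s, k < 2 ^ (m - 1)) : ∀ x y : Fin (2 ^ m),
    ((s.map (fun k => gossipM (2 ^ m) (fenc m r k) (fenc2 m r k))).prod * gK m r) x y
      = if (∃ k ∈ s, x = fenc m r k ∨ x = fenc2 m r k) then gK m (r + 1) x y
        else gK m r x y := by
  induction s with
  | nil =>
    intro x y
    simp only [List.map_nil, List.prod_nil, Matrix.one_mul, List.not_mem_nil]
    rw [if_neg (by simp)]
  | cons k s' ih =>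
    have hk : k < 2 ^ (m - 1) := hmem k (List.mem_cons_self)
    have hnd' : s'.Nodup := (List.nodup_cons.mp hnd).2
    have hknot : k ∉ s' := (List.nodup_cons.mp hnd).1
    have hmem' : ∀ k' ∈ s', k' < 2 ^ (m - 1) := fun k' h => hmem k' (List.mem_cons_of_mem _ h)
    have hnotpair : ∀ a : Fin (2 ^ m), ((a : ℕ) = genc r k ∨ (a : ℕ) = genc r k + 2 ^ r) →
        ¬ (∃ k' ∈ s', a = fenc m r k' ∨ a = fenc2 m r k') := by
      rintro a ha ⟨k', hk's, hor⟩
      have hk' : k' < 2 ^ (m - 1) := hmem' k' hk's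
      have hd1 := genc_div r k
      have hd2' := genc_add_div r k'
      have hd1' := genc_div r k'
      have hd2 := genc_add_div r k
      rcases hor with rfl | rfl
      · rw [fenc_val hr hk'] at ha
        rcases ha with ha | ha
        · exact hknot ((genc_inj r ha) ▸ hk's)
        · -- genc r k + 2^r = genc r k' : parity contradiction
          have h := congrArg (fun z => z / 2 ^ r) ha
          rw [hd2, hd1'] at h
          omega
      · rw [fenc2_val hr hk'] at ha
        rcases ha with ha | ha
        · have h := congrArg (fun z => z / 2 ^ r) ha
          rw [hd1, hd2'] at h
          omega
        · have : genc r k = genc r k' := by omega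
          exact hknot ((genc_inj r this) ▸ hk's)
    intro x y
    rw [List.map_cons, List.prod_cons, Matrix.mul_assoc, gossipM_mul_apply]
    set A := (s'.map (fun k => gossipM (2 ^ m) (fenc m r k) (fenc2 m r k))).prod * gK m r with hA
    have hAf : A (fenc m r k) y = gK m r (fenc m r k) y := by
      rw [ih hnd' hmem' (fenc m r k) y,
        if_neg (hnotpair _ (Or.inl (fenc_val hr hk)))]
    have hAf2 : A (fenc2 m r k) y = gK m r (fenc2 m r k) y := by
      rw [ih hnd' hmem' (fenc2 m r k) y,
        if_neg (hnotpair _ (Or.inr (fenc2_val hr hk)))]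
    rcases Classical.em (x = fenc m r k ∨ x = fenc2 m r k) with hxor | hxor
    · rw [if_pos hxor, hAf, hAf2, if_pos ⟨k, List.mem_cons_self, hxor⟩]
      rw [gK_apply, gK_apply, gK_apply, fenc_val hr hk, fenc2_val hr hk]
      have hxval : (x : ℕ) = genc r k ∨ (x : ℕ) = genc r k + 2 ^ r := by
        rcases hxor with rfl | rfl
        · exact Or.inl (fenc_val hr hk)
        · exact Or.inr (fenc2_val hr hk)
      exact gKf_avg hxval (y : ℕ)
    · rw [if_neg hxor, ih hnd' hmem' x y]
      by_cases hmem2 : ∃ k' ∈ s', x = fenc m r k' ∨ x = fenc2 m r k'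
      · obtain ⟨k', hk's, hor⟩ := hmem2
        rw [if_pos ⟨k', hk's, hor⟩, if_pos ⟨k', List.mem_cons_of_mem _ hk's, hor⟩]
      · rw [if_neg hmem2, if_neg ?_]
        rintro ⟨k', hk'mem, hor⟩
        rcases List.mem_cons.mp hk'mem with rfl | hk's
        · exact hxor hor
        · exact hmem2 ⟨k', hk's, hor⟩

def ground (m r : ℕ) : List (Matrix (Fin (2 ^ m)) (Fin (2 ^ m)) ℝ) :=
  (List.range (2 ^ (m - 1))).map (fun k => gossipM (2 ^ m) (fenc m r k) (fenc2 m r k))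

lemma ground_prod (m r : ℕ) (hr : r < m) : (ground m r).prod * gK m r = gK m (r + 1) := by
  unfold ground
  ext x y
  rw [Matrix.mul_apply]
  have := round_partial m r hr (List.range (2 ^ (m - 1))) List.nodup_range
    (fun k h => List.mem_range.mp h) x y
  rw [Matrix.mul_apply] at this
  rw [this, if_pos]
  obtain ⟨k, hk, hor⟩ := genc_cover hr x.isLt
  refine ⟨k, List.mem_range.mpr hk, ?_⟩
  rcases hor with h | h
  · exact Or.inl (Fin.ext (by rw [fenc_val hr hk, h]))
  · exact Or.inr (Fin.ext (by rw [fenc2_val hr hk, h]))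

def glist (m : ℕ) : List (Matrix (Fin (2 ^ m)) (Fin (2 ^ m)) ℝ) :=
  ((List.range m).reverse.map (ground m)).flatten

lemma gK_zero (m : ℕ) : gK m 0 = 1 := by
  ext x y
  rw [gK_apply, Matrix.one_apply]
  unfold gKf
  simp only [pow_zero, Nat.div_one, inv_one]
  by_cases h : (x : ℕ) = (y : ℕ)
  · rw [if_pos h, if_pos (Fin.ext h)]
  · rw [if_neg h, if_neg (fun he => h (congrArg Fin.val he))]

lemma glist_partial_prod (m : ℕ) : ∀ r ≤ m,
    (((List.range r).reverse.map (ground m)).flatten).prod = gK m r := by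
  intro r
  induction r with
  | zero => intro _; simp [gK_zero]
  | succ r ih =>
    intro hr
    rw [List.range_succ, List.reverse_append]
    simp only [List.reverse_singleton, List.singleton_append, List.map_cons, List.flatten_cons,
      List.prod_append]
    rw [ih (by omega)]
    exact ground_prod m r (by omega)

lemma glist_prod (m : ℕ) : (glist m).prod = gK m m := glist_partial_prod m m le_rfl

lemma gK_top (m : ℕ) (x y : Fin (2 ^ m)) : gK m m x y = ((2 ^ m : ℕ) : ℝ)⁻¹ := by
  rw [gK_apply]
  unfold gKf
  rw [Nat.div_eq_of_lt x.isLt, Nat.div_eq_of_lt y.isLt, if_pos rfl]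
  push_cast
  rfl

lemma glist_members (m : ℕ) : ∀ Q ∈ glist m, ∃ i j, Q = gossipM (2 ^ m) i j := by
  intro Q hQ
  rw [glist, List.mem_flatten] at hQ
  obtain ⟨l, hl, hQl⟩ := hQ
  rw [List.mem_map] at hl
  obtain ⟨r, _, rfl⟩ := hl
  rw [ground, List.mem_map] at hQl
  obtain ⟨k, _, rfl⟩ := hQl
  exact ⟨_, _, rfl⟩

lemma sum_map_const_real {α : Type*} (l : List α) (g : α → ℝ) (c : ℝ)
    (h : ∀ a ∈ l, g a = c) : (l.map g).sum = l.length * c := by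
  induction l with
  | nil => simp
  | cons a l ih =>
    rw [List.map_cons, List.sum_cons, ih (fun b hb => h b (List.mem_cons_of_mem _ hb)),
      h a (List.mem_cons_self), List.length_cons]
    push_cast
    ring

lemma ground_cost (m r : ℕ) (hr : r < m) :
    ((ground m r).map (fun Q => ∑ x, ∑ y, |(1 - Q) x y|)).sum = (2 ^ (m - 1) : ℕ) * 2 := by
  rw [ground, List.map_map]
  rw [sum_map_const_real _ _ 2]
  · rw [List.length_range]
  · intro k hk
    have hk' : k < 2 ^ (m - 1) := List.mem_range.mp hk
    simp only [Function.comp_apply]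
    rw [gossipM_cost, if_neg]
    intro h
    have := congrArg Fin.val h
    rw [fenc_val hr hk', fenc2_val hr hk'] at this
    have : (0:ℕ) < 2 ^ r := pow_pos2 r
    omega

lemma glist_cost (m : ℕ) :
    ((glist m).map (fun Q => ∑ x, ∑ y, |(1 - Q) x y|)).sum = ((m * 2 ^ m : ℕ) : ℝ) := by
  rw [glist, List.map_flatten, List.sum_flatten, List.map_map, List.map_map]
  rw [sum_map_const_real _ _ ((2 ^ (m - 1) : ℕ) * 2)]
  · rw [List.length_reverse, List.length_range]
    rcases Nat.eq_zero_or_pos m with rfl | hm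
    · simp
    · have : (2:ℕ) ^ (m - 1) * 2 = 2 ^ m := by
        rw [← pow_succ]; congr 1; omega
      push_cast [← this]
      ring
  · intro r hr
    have hr' : r < m := List.mem_range.mp (List.mem_reverse.mp hr)
    simp only [Function.comp_apply]
    exact ground_cost m r hr'

theorem stmt_1 (m n : ℕ) (hn : n = 2 ^ m) :
    IsLeast
      { c : ℝ | ∃ t : ℕ, 1 ≤ t ∧ ∃ P : Fin t → Matrix (Fin n) (Fin n) ℝ,
          (∀ k, ∃ i j, P k = gossipM n i j) ∧
          ((List.ofFn P).reverse.prod).rank = 1 ∧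
          c = ∑ k, ∑ i, ∑ j, |(1 - P k) i j| }
      ((m * n : ℕ) : ℝ) := by
  subst hn
  constructor
  · -- membership: the hypercube construction
    have hnpos : 0 < 2 ^ m := pow_pos2 m
    set z : Fin (2 ^ m) := ⟨0, hnpos⟩ with hz
    set L : List (Matrix (Fin (2 ^ m)) (Fin (2 ^ m)) ℝ) := glist m ++ [gossipM (2 ^ m) z z]
      with hL
    set Lrev := L.reverse with hLrev
    refine ⟨Lrev.length, ?_, fun k => Lrev.get k, ?_, ?_, ?_⟩
    · rw [hLrev, List.length_reverse, hL, List.length_append]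
      simp
    · intro k
      have hmem : Lrev.get k ∈ Lrev := by
        have := List.get_mem Lrev k
        simpa using this
      simp only [hLrev, List.mem_reverse, hL, List.mem_append, List.mem_singleton] at hmem
      rcases hmem with h | h
      · exact glist_members m _ h
      · exact ⟨z, z, h⟩
    · rw [List.ofFn_get, hLrev, List.reverse_reverse, hL, List.prod_append,
        List.prod_singleton, gossipM_eq_one, mul_one, glist_prod]
      exact rank_const_eq_one hnpos _ (gK_top m)
    · have h1 : (∑ k : Fin Lrev.length, ∑ i, ∑ j, |(1 - Lrev.get k) i j|)
          = (Lrev.map (fun Q => ∑ i, ∑ j, |(1 - Q) i j|)).sum := by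
        conv_rhs => rw [← List.ofFn_get Lrev]
        rw [List.map_ofFn, List.sum_ofFn]
        simp [Function.comp]
      rw [h1, hLrev, List.map_reverse, List.sum_reverse, hL, List.map_append,
        List.sum_append, List.map_singleton, List.sum_singleton, gossipM_cost, if_pos rfl,
        add_zero, glist_cost]
  · intro c hc
    exact lower_bound m (2 ^ m) rfl c hc
end construction
end

section
/- Let n = 2^m with m ≥ 1 an integer. Then any matrices P_0, …, P_{t−1} ∈ 𝓜_n (t ≥ 1) with rank(P_{t−1}⋯P_0) = 1 satisfy Σ_{k=0}^{t−1} ‖I_n − P_k‖_1 ≥ m·n; in particular, since each nontrivial matrix in 𝓜_n updates exactly two nodes, at least m·n/2 nontrivial gossip steps are required to reach finite-time consensus. -/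
open Matrix

namespace GossipAux

variable {n : ℕ}

/-- the vector e_i - e_j -/
noncomputable def u (i j : Fin n) : Fin n → ℝ := Pi.single i 1 - Pi.single j 1

lemma u_apply (i j a : Fin n) :
    u i j a = (if a = i then (1:ℝ) else 0) - (if a = j then 1 else 0) := by
  simp [u, Pi.single_apply]

lemma gossip_apply (i j a b : Fin n) :
    gossipM n i j a b = (1 : Matrix (Fin n) (Fin n) ℝ) a b - (1/2) * (u i j a * u i j b) := by
  simp [gossipM, vecMulVec, u]

lemma gossip_diag (i : Fin n) : gossipM n i i = 1 := by
  ext a b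
  simp [gossipM, vecMulVec, sub_self]

lemma sum_u (i j : Fin n) : ∑ a, u i j a = 0 := by
  simp [u, Finset.sum_sub_distrib, Pi.single_apply]

lemma gossip_row_sum (i j a : Fin n) : ∑ b, gossipM n i j a b = 1 := by
  calc ∑ b, gossipM n i j a b
      = ∑ b, ((1 : Matrix (Fin n) (Fin n) ℝ) a b - (1/2) * (u i j a * u i j b)) :=
        Finset.sum_congr rfl fun b _ => gossip_apply i j a b
    _ = (∑ b, (1 : Matrix (Fin n) (Fin n) ℝ) a b) - (1/2) * (u i j a * ∑ b, u i j b) := by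
        rw [Finset.sum_sub_distrib, Finset.mul_sum, Finset.mul_sum]
    _ = 1 := by rw [sum_u]; simp [Matrix.one_apply]

lemma gossip_col_sum (i j b : Fin n) : ∑ a, gossipM n i j a b = 1 := by
  calc ∑ a, gossipM n i j a b
      = ∑ a, ((1 : Matrix (Fin n) (Fin n) ℝ) a b - (1/2) * (u i j a * u i j b)) :=
        Finset.sum_congr rfl fun a _ => gossip_apply i j a b
    _ = (∑ a, (1 : Matrix (Fin n) (Fin n) ℝ) a b) - (1/2) * ((∑ a, u i j a) * u i j b) := by
        rw [Finset.sum_sub_distrib]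
        congr 1
        rw [Finset.sum_mul, Finset.mul_sum]
    _ = 1 := by rw [sum_u]; simp [Matrix.one_apply]

lemma gossip_ne_one {i j : Fin n} (h : i ≠ j) : gossipM n i j ≠ 1 := by
  intro hE
  have h2 : gossipM n i j i j = (1 : Matrix (Fin n) (Fin n) ℝ) i j := by rw [hE]
  rw [gossip_apply] at h2
  simp only [u_apply, Matrix.one_apply, if_pos rfl, if_neg h, if_neg (Ne.symm h)] at h2
  norm_num at h2

lemma gossip_nonneg (i j : Fin n) (a b : Fin n) : 0 ≤ gossipM n i j a b := by
  rw [gossip_apply, u_apply, u_apply, Matrix.one_apply]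
  by_cases hab : a = b <;> by_cases hai : a = i <;> by_cases haj : a = j <;>
    by_cases hbi : b = i <;> by_cases hbj : b = j <;>
    simp_all <;> norm_num

/-- action of a gossip matrix on the left: rows i and j get averaged. -/
lemma gossip_mul_apply {i j : Fin n} (h : i ≠ j) (A : Matrix (Fin n) (Fin n) ℝ) (a b : Fin n) :
    (gossipM n i j * A) a b =
      if a = i ∨ a = j then (A i b + A j b) / 2 else A a b := by
  have hsum : (gossipM n i j * A) a b
      = A a b - (1/2) * (u i j a * (A i b - A j b)) := by
    rw [Matrix.mul_apply]
    calc ∑ k, gossipM n i j a k * A k b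
        = ∑ k, ((1 : Matrix (Fin n) (Fin n) ℝ) a k * A k b - (1/2) * (u i j a * (u i j k * A k b))) := by
          refine Finset.sum_congr rfl fun k _ => ?_
          rw [gossip_apply]; ring
      _ = (∑ k, (1 : Matrix (Fin n) (Fin n) ℝ) a k * A k b)
          - (1/2) * (u i j a * ∑ k, u i j k * A k b) := by
          rw [Finset.sum_sub_distrib, Finset.mul_sum, Finset.mul_sum]
      _ = A a b - (1/2) * (u i j a * (A i b - A j b)) := by
          congr 1
          · simp [Matrix.one_apply]
          · congr 2
            simp [u_apply, sub_mul, Finset.sum_sub_distrib, ite_mul]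
  rw [hsum]
  by_cases hai : a = i
  · subst hai
    simp only [u_apply, if_pos rfl, if_neg h, true_or, if_pos]
    ring
  · by_cases haj : a = j
    · subst haj
      simp only [u_apply, if_neg (Ne.symm h), if_pos rfl, or_true, if_pos, if_neg hai]
      ring
    · simp [u_apply, hai, haj]

/-- the maximum of a row -/
noncomputable def rmax [NeZero n] (A : Matrix (Fin n) (Fin n) ℝ) (a : Fin n) : ℝ :=
  Finset.univ.sup' Finset.univ_nonempty (A a)

lemma le_rmax [NeZero n] (A : Matrix (Fin n) (Fin n) ℝ) (a b : Fin n) : A a b ≤ rmax A a :=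
  Finset.le_sup' _ (Finset.mem_univ b)

lemma rmax_pos [NeZero n] {A : Matrix (Fin n) (Fin n) ℝ}
    (h0 : ∀ a b, 0 ≤ A a b) (hs : ∀ a, ∑ b, A a b = 1) (a : Fin n) : 0 < rmax A a := by
  obtain ⟨b, hb⟩ : ∃ b, A a b ≠ 0 := by
    by_contra hc
    push_neg at hc
    have := hs a
    simp [hc] at this
  exact lt_of_lt_of_le (lt_of_le_of_ne (h0 a b) (Ne.symm hb)) (le_rmax A a b)

lemma mul_nonneg_entries {A B : Matrix (Fin n) (Fin n) ℝ}
    (hA : ∀ a b, 0 ≤ A a b) (hB : ∀ a b, 0 ≤ B a b) : ∀ a b, 0 ≤ (A * B) a b := by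
  intro a b
  rw [Matrix.mul_apply]
  exact Finset.sum_nonneg fun k _ => mul_nonneg (hA a k) (hB k b)

lemma mul_row_sum {A B : Matrix (Fin n) (Fin n) ℝ}
    (hA : ∀ a, ∑ b, A a b = 1) (hB : ∀ a, ∑ b, B a b = 1) : ∀ a, ∑ b, (A * B) a b = 1 := by
  intro a
  simp only [Matrix.mul_apply]
  rw [Finset.sum_comm]
  have : ∀ k : Fin n, ∑ b, A a k * B k b = A a k := by
    intro k; rw [← Finset.mul_sum, hB k, mul_one]
  calc ∑ k, ∑ b, A a k * B k b = ∑ k, A a k := Finset.sum_congr rfl fun k _ => this k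
    _ = 1 := hA a

lemma mul_col_sum {A B : Matrix (Fin n) (Fin n) ℝ}
    (hA : ∀ b, ∑ a, A a b = 1) (hB : ∀ b, ∑ a, B a b = 1) : ∀ b, ∑ a, (A * B) a b = 1 := by
  intro b
  simp only [Matrix.mul_apply]
  rw [Finset.sum_comm]
  have : ∀ k : Fin n, ∑ a, A a k * B k b = B k b := by
    intro k; rw [← Finset.sum_mul, hA k, one_mul]
  calc ∑ k, ∑ a, A a k * B k b = ∑ k, B k b := Finset.sum_congr rfl fun k _ => this k
    _ = 1 := hB b

/-- Key step: left-multiplying by a nontrivial gossip matrix decreases the product of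
row maxima by at most a factor 4. -/
lemma key_step [NeZero n] {i j : Fin n} (h : i ≠ j) {A : Matrix (Fin n) (Fin n) ℝ}
    (h0 : ∀ a b, 0 ≤ A a b) (hs : ∀ a, ∑ b, A a b = 1) :
    (1/4 : ℝ) * ∏ a, rmax A a ≤ ∏ a, rmax (gossipM n i j * A) a := by
  set B := gossipM n i j * A with hB
  have hBrow : ∀ a, a ≠ i → a ≠ j → ∀ b, B a b = A a b := by
    intro a hai haj b
    rw [hB, gossip_mul_apply h]
    simp [hai, haj]
  have hBi : ∀ b, B i b = (A i b + A j b) / 2 := fun b => by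
    rw [hB, gossip_mul_apply h]; simp
  have hBj : ∀ b, B j b = (A i b + A j b) / 2 := fun b => by
    rw [hB, gossip_mul_apply h]; simp
  have hrBi : rmax A i / 2 ≤ rmax B i := by
    obtain ⟨b, -, hb⟩ := Finset.exists_mem_eq_sup' (Finset.univ_nonempty) (A i)
    calc rmax A i / 2 = A i b / 2 := by rw [rmax, hb]
      _ ≤ (A i b + A j b) / 2 := by linarith [h0 j b]
      _ = B i b := (hBi b).symm
      _ ≤ rmax B i := le_rmax B i b
  have hrBj : rmax A j / 2 ≤ rmax B j := by
    obtain ⟨b, -, hb⟩ := Finset.exists_mem_eq_sup' (Finset.univ_nonempty) (A j)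
    calc rmax A j / 2 = A j b / 2 := by rw [rmax, hb]
      _ ≤ (A i b + A j b) / 2 := by linarith [h0 i b]
      _ = B j b := (hBj b).symm
      _ ≤ rmax B j := le_rmax B j b
  have hApos := rmax_pos h0 hs
  have hmemj : j ∈ Finset.univ.erase i := Finset.mem_erase.2 ⟨h.symm, Finset.mem_univ j⟩
  have decompose : ∀ C : Matrix (Fin n) (Fin n) ℝ,
      ∏ a, rmax C a = rmax C i * (rmax C j * ∏ a ∈ (Finset.univ.erase i).erase j, rmax C a) := by
    intro C
    rw [← Finset.mul_prod_erase Finset.univ _ (Finset.mem_univ i),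
      ← Finset.mul_prod_erase (Finset.univ.erase i) _ hmemj]
  have hrest : ∏ a ∈ (Finset.univ.erase i).erase j, rmax B a
      = ∏ a ∈ (Finset.univ.erase i).erase j, rmax A a := by
    refine Finset.prod_congr rfl fun a ha => ?_
    rw [Finset.mem_erase, Finset.mem_erase] at ha
    unfold rmax
    exact congrArg _ (funext fun b => hBrow a ha.2.1 ha.1 b)
  have hrestpos : 0 ≤ ∏ a ∈ (Finset.univ.erase i).erase j, rmax A a :=
    Finset.prod_nonneg fun a _ => (hApos a).le
  rw [decompose A, decompose B, hrest]
  have h1 : (1/4 : ℝ) * (rmax A i * rmax A j) ≤ rmax B i * rmax B j := by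
    have h2 : (rmax A i / 2) * (rmax A j / 2) ≤ rmax B i * rmax B j :=
      mul_le_mul hrBi hrBj (by linarith [hApos j]) (le_trans (by linarith [hApos i]) hrBi)
    calc (1/4 : ℝ) * (rmax A i * rmax A j) = (rmax A i / 2) * (rmax A j / 2) := by ring
      _ ≤ rmax B i * rmax B j := h2
  calc (1/4:ℝ) * (rmax A i * (rmax A j * ∏ a ∈ (Finset.univ.erase i).erase j, rmax A a))
      = ((1/4:ℝ) * (rmax A i * rmax A j)) * ∏ a ∈ (Finset.univ.erase i).erase j, rmax A a := by
        ring
    _ ≤ (rmax B i * rmax B j) * ∏ a ∈ (Finset.univ.erase i).erase j, rmax A a :=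
        mul_le_mul_of_nonneg_right h1 hrestpos
    _ = rmax B i * (rmax B j * ∏ a ∈ (Finset.univ.erase i).erase j, rmax A a) := by ring

/-- Main induction over the list of gossip matrices. -/
lemma main_induction [NeZero n] (L : List (Matrix (Fin n) (Fin n) ℝ))
    (hL : ∀ M ∈ L, ∃ i j, M = gossipM n i j) :
    (∀ a b, 0 ≤ L.prod a b) ∧ (∀ a, ∑ b, L.prod a b = 1) ∧ (∀ b, ∑ a, L.prod a b = 1) ∧
      (1/4 : ℝ) ^ (L.countP (fun M => M ≠ 1)) ≤ ∏ a, rmax L.prod a := by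
  induction L with
  | nil =>
    refine ⟨?_, ?_, ?_, ?_⟩
    · intro a b
      simp only [List.prod_nil, Matrix.one_apply]
      split <;> norm_num
    · intro a; simp [Matrix.one_apply]
    · intro b; simp [Matrix.one_apply]
    · simp only [List.countP_nil, pow_zero, List.prod_nil]
      calc (1:ℝ) = ∏ _a : Fin n, (1:ℝ) := by simp
        _ ≤ ∏ a, rmax (1 : Matrix (Fin n) (Fin n) ℝ) a := by
            refine Finset.prod_le_prod (fun a _ => zero_le_one) (fun a _ => ?_)
            calc (1:ℝ) = (1 : Matrix (Fin n) (Fin n) ℝ) a a := by simp [Matrix.one_apply]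
              _ ≤ rmax 1 a := le_rmax _ a a
  | cons M L ih =>
    obtain ⟨h0, hrow, hcol, hpot⟩ := ih (fun M' hM' => hL M' (List.mem_cons_of_mem M hM'))
    obtain ⟨i, j, hij⟩ := hL M List.mem_cons_self
    rw [List.prod_cons]
    by_cases hij' : i = j
    · subst hij'
      rw [gossip_diag] at hij
      subst hij
      rw [one_mul]
      refine ⟨h0, hrow, hcol, ?_⟩
      have hcount : ((1 : Matrix (Fin n) (Fin n) ℝ) :: L).countP (fun M => M ≠ 1)
          = L.countP (fun M => M ≠ 1) := by
        rw [List.countP_cons]; simp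
      rw [hcount]
      exact hpot
    · subst hij
      have h0' := mul_nonneg_entries (fun a b => gossip_nonneg i j a b) h0
      have hrow' := mul_row_sum (fun a => gossip_row_sum i j a) hrow
      have hcol' := mul_col_sum (fun b => gossip_col_sum i j b) hcol
      refine ⟨h0', hrow', hcol', ?_⟩
      have hcount : (gossipM n i j :: L).countP (fun M => M ≠ 1)
          = L.countP (fun M => M ≠ 1) + 1 := by
        rw [List.countP_cons]
        simp [gossip_ne_one hij']
      rw [hcount, pow_succ]
      calc (1/4 : ℝ) ^ L.countP (fun M => M ≠ 1) * (1/4)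
          ≤ (∏ a, rmax L.prod a) * (1/4) := by
            apply mul_le_mul_of_nonneg_right hpot; norm_num
        _ = (1/4 : ℝ) * ∏ a, rmax L.prod a := by ring
        _ ≤ ∏ a, rmax (gossipM n i j * L.prod) a := key_step hij' h0 hrow

/-- A rank-one matrix with all row sums and column sums equal to 1 is constant 1/n. -/
lemma rank_one_doubly_stochastic [NeZero n] {Q : Matrix (Fin n) (Fin n) ℝ}
    (hrank : Q.rank = 1) (hrow : ∀ a, ∑ b, Q a b = 1) (hcol : ∀ b, ∑ a, Q a b = 1) :
    ∀ a b, Q a b = 1 / n := by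
  have hnpos : 0 < n := Nat.pos_of_ne_zero (NeZero.ne n)
  have hones : Q *ᵥ (fun _ => (1:ℝ)) = fun _ => (1:ℝ) := by
    funext a
    simp only [Matrix.mulVec, dotProduct, mul_one]
    exact hrow a
  have hmem : (fun _ => (1:ℝ)) ∈ LinearMap.range Q.mulVecLin :=
    ⟨fun _ => (1:ℝ), hones⟩
  have hne : (fun _ => (1:ℝ) : Fin n → ℝ) ≠ 0 := by
    intro hc
    have := congrFun hc ⟨0, hnpos⟩
    norm_num at this
  have hle : (Submodule.span ℝ {(fun _ => (1:ℝ) : Fin n → ℝ)}) ≤ LinearMap.range Q.mulVecLin := by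
    rw [Submodule.span_singleton_le_iff_mem]; exact hmem
  have heq : (Submodule.span ℝ {(fun _ => (1:ℝ) : Fin n → ℝ)}) = LinearMap.range Q.mulVecLin := by
    apply Submodule.eq_of_le_of_finrank_le hle
    rw [show Module.finrank ℝ (LinearMap.range Q.mulVecLin) = Q.rank from rfl, hrank,
      finrank_span_singleton hne]
  intro a b
  have hcolmem : (Q *ᵥ Pi.single b 1) ∈ LinearMap.range Q.mulVecLin :=
    ⟨Pi.single b 1, rfl⟩
  rw [← heq, Submodule.mem_span_singleton] at hcolmem
  obtain ⟨r, hr⟩ := hcolmem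
  have hQcol : ∀ c, Q c b = r := by
    intro c
    have := congrFun hr c
    simpa using this.symm
  have hsum : (n : ℝ) * r = 1 := by
    have h1 := hcol b
    rw [Finset.sum_congr rfl (fun c _ => hQcol c)] at h1
    simpa [Finset.sum_const, Finset.card_univ, nsmul_eq_mul] using h1
  rw [hQcol a]
  have : (n:ℝ) ≠ 0 := Nat.cast_ne_zero.2 (NeZero.ne n)
  field_simp at hsum ⊢
  linarith

lemma abs_u_sum {i j : Fin n} (h : i ≠ j) : ∑ a, |u i j a| = 2 := by
  have habs : ∀ a, |u i j a| = (if a = i then (1:ℝ) else 0) + (if a = j then 1 else 0) := by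
    intro a
    rw [u_apply]
    by_cases hai : a = i
    · subst hai; simp [h]
    · by_cases haj : a = j
      · subst haj; simp [Ne.symm h, hai]
      · simp [hai, haj]
  rw [Finset.sum_congr rfl (fun a _ => habs a)]
  rw [Finset.sum_add_distrib]
  simp
  norm_num

lemma norm_one_sub_gossip {i j : Fin n} (h : i ≠ j) :
    ∑ a, ∑ b, |(1 - gossipM n i j) a b| = 2 := by
  have hent : ∀ a b, (1 - gossipM n i j) a b = (1/2) * (u i j a * u i j b) := by
    intro a b
    have h1 := gossip_apply i j a b
    have h2 : (1 - gossipM n i j) a b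
        = (1 : Matrix (Fin n) (Fin n) ℝ) a b - gossipM n i j a b := rfl
    rw [h2, h1]; ring
  have habs : ∀ a b, |(1 - gossipM n i j) a b| = (1/2) * (|u i j a| * |u i j b|) := by
    intro a b
    rw [hent a b, abs_mul, abs_mul, abs_of_nonneg (by norm_num : (0:ℝ) ≤ 1/2)]
  calc ∑ a, ∑ b, |(1 - gossipM n i j) a b|
      = ∑ a, ∑ b, (1/2) * (|u i j a| * |u i j b|) :=
        Finset.sum_congr rfl fun a _ => Finset.sum_congr rfl fun b _ => habs a b
    _ = ∑ a, (1/2) * (|u i j a| * ∑ b, |u i j b|) := by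
        refine Finset.sum_congr rfl fun a _ => ?_
        rw [Finset.mul_sum, Finset.mul_sum]
    _ = (1/2) * ((∑ a, |u i j a|) * (∑ b, |u i j b|)) := by
        rw [Finset.sum_mul, Finset.mul_sum]
    _ = 2 := by rw [abs_u_sum h]; norm_num

end GossipAux

theorem stmt_2 (m n : ℕ) (hm : 1 ≤ m) (hn : n = 2 ^ m) (t : ℕ) (ht : 1 ≤ t)
    (P : Fin t → Matrix (Fin n) (Fin n) ℝ)
    (hP : ∀ k, ∃ i j, P k = gossipM n i j)
    (hrank : ((List.ofFn P).reverse.prod).rank = 1) :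
    ((m * n : ℕ) : ℝ) ≤ ∑ k, ∑ i, ∑ j, |(1 - P k) i j| ∧
      m * n ≤ 2 * (Finset.univ.filter fun k => P k ≠ 1).card := by
  have hn0 : 0 < n := hn ▸ (Nat.pow_pos (by norm_num : 0 < 2) : 0 < 2 ^ m)
  haveI : NeZero n := ⟨hn0.ne'⟩
  set L := (List.ofFn P).reverse with hLdef
  have hL : ∀ M ∈ L, ∃ i j, M = gossipM n i j := by
    intro M hM
    rw [hLdef, List.mem_reverse, List.mem_ofFn] at hM
    obtain ⟨k, hk⟩ := hM
    exact hk ▸ hP k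
  obtain ⟨h0, hrow, hcol, hpot⟩ := GossipAux.main_induction L hL
  have hQ := GossipAux.rank_one_doubly_stochastic hrank hrow hcol
  -- the product of row maxima of the final matrix is (1/n)^n
  have hrmax : ∀ a, GossipAux.rmax L.prod a = 1 / (n:ℝ) := by
    intro a
    unfold GossipAux.rmax
    have hconst : (L.prod a) = fun _b => (1:ℝ)/n := funext fun b => hQ a b
    rw [hconst]
    exact Finset.sup'_const _ _
  have hprod : ∏ a, GossipAux.rmax L.prod a = ((1:ℝ)/n)^n := by
    rw [Finset.prod_congr rfl fun a _ => hrmax a]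
    simp [Finset.prod_const, Finset.card_univ]
  set N := L.countP (fun M => M ≠ 1) with hNdef
  -- (1/2)^(2N) ≤ (1/2)^(m n)
  have hhalf : ((1:ℝ)/2) ^ (2*N) ≤ ((1:ℝ)/2) ^ (m*n) := by
    have e1 : ((1:ℝ)/2) ^ (2*N) = ((1:ℝ)/4) ^ N := by
      rw [pow_mul]; norm_num
    have e2 : ((1:ℝ)/2) ^ (m*n) = ((1:ℝ)/n)^n := by
      rw [pow_mul]
      congr 1
      rw [hn]
      push_cast
      rw [div_pow]
      norm_num
    rw [e1, e2]
    exact hprod ▸ hpot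
  have hmn : m * n ≤ 2 * N := by
    by_contra hc
    push_neg at hc
    have hstrict : ((1:ℝ)/2) ^ (m*n) < ((1:ℝ)/2) ^ (2*N) :=
      (pow_lt_pow_iff_right_of_lt_one₀ (by norm_num : (0:ℝ) < 1/2)
        (by norm_num : (1:ℝ)/2 < 1)).2 hc
    linarith
  -- identify N with the filter cardinality
  have hNcard : N = (Finset.univ.filter fun k => P k ≠ 1).card := by
    rw [hNdef, hLdef, List.countP_reverse, List.ofFn_eq_map, List.countP_map]
    rw [Fin.univ_def]
    simp [Finset.filter, Finset.card, Multiset.countP_eq_card_filter,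
      List.countP_eq_length_filter, Function.comp_def]
  rw [hNcard] at hmn
  refine ⟨?_, hmn⟩
  -- sum of 1-norms equals 2 * (number of nontrivial matrices)
  have hS : ∀ k, ∑ i, ∑ j, |(1 - P k) i j| = if P k = 1 then 0 else 2 := by
    intro k
    obtain ⟨i, j, hij⟩ := hP k
    by_cases hij' : i = j
    · subst hij'
      rw [GossipAux.gossip_diag] at hij
      rw [if_pos hij, hij]
      simp
    · rw [if_neg (hij ▸ GossipAux.gossip_ne_one hij'), hij]
      exact GossipAux.norm_one_sub_gossip hij'
  rw [Finset.sum_congr rfl fun k _ => hS k]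
  have : ∑ k, (if P k = 1 then (0:ℝ) else 2)
      = ((Finset.univ.filter fun k => P k ≠ 1).card : ℝ) * 2 := by
    rw [Finset.sum_ite, Finset.sum_const, Finset.sum_const]
    simp
  rw [this]
  calc ((m*n : ℕ) : ℝ) ≤ ((2 * (Finset.univ.filter fun k => P k ≠ 1).card : ℕ) : ℝ) := by
        exact_mod_cast hmn
    _ = ((Finset.univ.filter fun k => P k ≠ 1).card : ℝ) * 2 := by push_cast; ring
end

section
/- Let n ≥ 2 be an integer that is not a power of two. Then the set Z = { x ∈ ℝ^n : there exist t ≥ 1 and P_0, …, P_{t−1} ∈ 𝓜_n with P_{t−1}⋯P_0 x ∈ span{1} } has Lebesgue measure zero; i.e., for almost every initial value no symmetric gossip algorithm converges in finite time. -/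
open Matrix

lemma gossip_vecMul_one (n : ℕ) (i j : Fin n) :
    (fun _ => (1:ℝ)) ᵥ* gossipM n i j = fun _ => 1 := by
  set v : Fin n → ℝ := Pi.single i 1 - Pi.single j 1 with hvdef
  have hv : (∑ a, v a) = 0 := by
    simp [hvdef, Pi.sub_apply, Finset.sum_sub_distrib, Pi.single_apply]
  funext k
  simp only [gossipM, ← hvdef, vecMul, dotProduct, Matrix.sub_apply, Matrix.smul_apply,
    vecMulVec_apply, smul_eq_mul, one_mul, Finset.sum_sub_distrib]
  have h2 : ∑ a, 1/2 * (v a * v k) = 0 := by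
    calc ∑ a, 1/2 * (v a * v k) = ∑ a, v a * (1/2 * v k) :=
          Finset.sum_congr rfl fun a _ => by ring
      _ = (∑ a, v a) * (1/2 * v k) := (Finset.sum_mul ..).symm
      _ = 0 := by rw [hv, zero_mul]
  rw [h2]
  simp [Matrix.one_apply]

lemma gossip_dyadic (n : ℕ) (i j : Fin n) :
    ∃ C : Matrix (Fin n) (Fin n) ℤ, C.map (Int.cast : ℤ → ℝ) = (2:ℝ) • gossipM n i j := by
  refine ⟨Matrix.of (fun a b => (if a = b then 2 else 0) -
      ((Pi.single i 1 - Pi.single j 1 : Fin n → ℤ) a *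
       (Pi.single i 1 - Pi.single j 1 : Fin n → ℤ) b)), ?_⟩
  ext a b
  simp only [gossipM, Matrix.map_apply, Matrix.of_apply, Matrix.smul_apply, Matrix.sub_apply,
    vecMulVec_apply, Matrix.one_apply, Pi.sub_apply, Pi.single_apply, smul_eq_mul]
  split_ifs <;> push_cast <;> ring

lemma list_vecMul_one (n : ℕ) (L : List (Matrix (Fin n) (Fin n) ℝ))
    (hL : ∀ M ∈ L, ∃ i j, M = gossipM n i j) :
    (fun _ => (1:ℝ)) ᵥ* L.prod = fun _ => 1 := by
  induction L with
  | nil => simp [Matrix.vecMul_one]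
  | cons M L ih =>
    obtain ⟨i, j, rfl⟩ := hL M List.mem_cons_self
    rw [List.prod_cons, ← Matrix.vecMul_vecMul, gossip_vecMul_one,
      ih (fun M hM => hL M (List.mem_cons_of_mem _ hM))]

lemma list_dyadic (n : ℕ) (L : List (Matrix (Fin n) (Fin n) ℝ))
    (hL : ∀ M ∈ L, ∃ i j, M = gossipM n i j) :
    ∃ C : Matrix (Fin n) (Fin n) ℤ, C.map (Int.cast : ℤ → ℝ) = (2:ℝ)^L.length • L.prod := by
  induction L with
  | nil => exact ⟨1, by simp⟩
  | cons M L ih =>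
    obtain ⟨C, hC⟩ := ih (fun M hM => hL M (List.mem_cons_of_mem _ hM))
    obtain ⟨i, j, rfl⟩ := hL M List.mem_cons_self
    obtain ⟨D, hD⟩ := gossip_dyadic n i j
    refine ⟨D * C, ?_⟩
    rw [show (Int.cast : ℤ → ℝ) = ⇑(Int.castRingHom ℝ) from rfl] at hC hD ⊢
    rw [Matrix.map_mul, hC, hD, List.prod_cons, List.length_cons]
    rw [Matrix.smul_mul, Matrix.mul_smul, smul_smul, pow_succ]
    ring_nf

lemma key_lemma (n : ℕ) (hn : 2 ≤ n) (hnp : ¬ ∃ m : ℕ, n = 2 ^ m)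
    (L : List (Matrix (Fin n) (Fin n) ℝ))
    (hL : ∀ M ∈ L, ∃ i j, M = gossipM n i j) :
    (Submodule.span ℝ {(fun _ => (1:ℝ) : Fin n → ℝ)}).comap L.prod.mulVecLin ≠ ⊤ := by
  intro htop
  set A := L.prod with hA
  have z : Fin n := ⟨0, by omega⟩
  -- column z of A is constant
  have hx : (Pi.single z (1:ℝ)) ∈
      (Submodule.span ℝ {(fun _ => (1:ℝ) : Fin n → ℝ)}).comap A.mulVecLin := by
    rw [htop]; trivial
  rw [Submodule.mem_comap, Submodule.mem_span_singleton] at hx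
  obtain ⟨c, hc⟩ := hx
  have hcol : ∀ i : Fin n, A i z = c := by
    intro i
    have := congrFun hc i
    simpa [Matrix.mulVecLin_apply, Matrix.mulVec_single] using this.symm
  -- column sums are 1
  have hsum : ∑ i, A i z = 1 := by
    have := congrFun (list_vecMul_one n L hL) z
    simpa [Matrix.vecMul, dotProduct] using this
  have hnc : (n:ℝ) * c = 1 := by
    rw [← hsum]
    simp [hcol, Finset.sum_const, Finset.card_univ, mul_comm]
  -- dyadic entries
  obtain ⟨C, hC⟩ := list_dyadic n L hL
  rw [← hA] at hC
  have hentry : ((C z z : ℤ) : ℝ) = (2:ℝ)^L.length * c := by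
    have := congrFun (congrFun hC z) z
    simpa [Matrix.map_apply, hcol z] using this
  have hnz : (n:ℝ) ≠ 0 := by positivity
  have hZ : ((n * C z z : ℤ) : ℝ) = ((2^L.length : ℤ) : ℝ) := by
    push_cast
    rw [hentry]
    have : c = 1 / n := by field_simp at hnc ⊢; linarith
    rw [this]
    field_simp
  have hZ' : (n : ℤ) * C z z = 2 ^ L.length := by exact_mod_cast hZ
  have hdvd : (n : ℤ) ∣ 2 ^ L.length := ⟨C z z, hZ'.symm⟩
  have hdvd' : n ∣ 2 ^ L.length := by
    have : (n:ℤ) ∣ ((2^L.length : ℕ) : ℤ) := by push_cast; exact hdvd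
    exact_mod_cast this
  obtain ⟨k, -, hk⟩ := (Nat.dvd_prime_pow Nat.prime_two).mp hdvd'
  exact hnp ⟨k, hk⟩

theorem stmt_4 (n : ℕ) (hn : 2 ≤ n) (hnp : ¬ ∃ m : ℕ, n = 2 ^ m) :
    MeasureTheory.volume
      { x : Fin n → ℝ |
        ∃ t : ℕ, 1 ≤ t ∧ ∃ P : Fin t → Matrix (Fin n) (Fin n) ℝ,
          (∀ k, ∃ i j, P k = gossipM n i j) ∧
          ∃ c : ℝ, ((List.ofFn P).reverse.prod).mulVec x = fun _ => c } = 0 := by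
  classical
  set K : Submodule ℝ (Fin n → ℝ) := Submodule.span ℝ {(fun _ => (1:ℝ) : Fin n → ℝ)} with hK
  have hsub : { x : Fin n → ℝ |
        ∃ t : ℕ, 1 ≤ t ∧ ∃ P : Fin t → Matrix (Fin n) (Fin n) ℝ,
          (∀ k, ∃ i j, P k = gossipM n i j) ∧
          ∃ c : ℝ, ((List.ofFn P).reverse.prod).mulVec x = fun _ => c } ⊆
      ⋃ (t : ℕ) (σ : Fin t → Fin n × Fin n),
        (K.comap ((List.ofFn (fun k => gossipM n (σ k).1 (σ k).2)).reverse.prod).mulVecLin :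
          Set (Fin n → ℝ)) := by
    rintro x ⟨t, -, P, hP, c, hc⟩
    choose i j hij using hP
    refine Set.mem_iUnion.mpr ⟨t, Set.mem_iUnion.mpr ⟨fun k => (i k, j k), ?_⟩⟩
    have hPeq : (fun k => gossipM n (i k) (j k)) = P := (funext hij).symm
    simp only [Submodule.mem_comap, SetLike.mem_coe, Matrix.mulVecLin_apply, hPeq]
    rw [hK, Submodule.mem_span_singleton]
    exact ⟨c, by rw [hc]; funext k; simp⟩
  refine MeasureTheory.measure_mono_null hsub ?_
  refine MeasureTheory.measure_iUnion_null fun t => ?_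
  refine MeasureTheory.measure_iUnion_null fun σ => ?_
  apply MeasureTheory.Measure.addHaar_submodule
  apply key_lemma n hn hnp
  intro M hM
  rw [List.mem_reverse] at hM
  obtain ⟨k, hk⟩ := List.mem_ofFn.mp hM
  exact ⟨_, _, hk.symm⟩
end

section
/- Let n = 4 and suppose P_0, P_1, P_2, … is a sequence of matrices of the form M_{ij} with i ≠ j in {1,2,3,4} such that P_k ≠ P_{k+1} for all k ≥ 0. Set Ψ_h = P_{h−1}⋯P_0 for h ≥ 1. Then there is no h ≥ 1 for which Ψ_h simultaneously has exactly two distinct rows and three of its four rows equal to each other (i.e., no Ψ_h has a row-value pattern in which one row vector occurs three times and another occurs once). -/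
open Matrix

noncomputable def mrg (i j : Fin 4) (x : Fin 4 → ℝ) : Fin 4 → ℝ :=
  fun m => if m = i ∨ m = j then (x i + x j)/2 else x m

lemma cover4 : ∀ i j k l m : Fin 4, i ≠ j → i ≠ k → i ≠ l → j ≠ k → j ≠ l → k ≠ l →
    i = m ∨ j = m ∨ k = m ∨ l = m := by decide

lemma complete2 : ∀ i j : Fin 4, i ≠ j → ∃ k l : Fin 4,
    i ≠ k ∧ i ≠ l ∧ j ≠ k ∧ j ≠ l ∧ k ≠ l := by decide

lemma mrg_left (i j : Fin 4) (x : Fin 4 → ℝ) : mrg i j x i = (x i + x j)/2 := by simp [mrg]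
lemma mrg_right (i j : Fin 4) (x : Fin 4 → ℝ) : mrg i j x j = (x i + x j)/2 := by simp [mrg]
lemma mrg_other {i j m : Fin 4} (x : Fin 4 → ℝ) (hmi : m ≠ i) (hmj : m ≠ j) :
    mrg i j x m = x m := by simp [mrg, hmi, hmj]

lemma sum_four (f : Fin 4 → ℝ) (i j k l : Fin 4) (hij : i ≠ j) (hik : i ≠ k)
    (hil : i ≠ l) (hjk : j ≠ k) (hjl : j ≠ l) (hkl : k ≠ l) :
    ∑ m, f m = f i + f j + f k + f l := by
  have huniv : (Finset.univ : Finset (Fin 4)) = {i, j, k, l} :=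
    (Finset.eq_univ_iff_forall.mpr (fun m => by
      rcases cover4 i j k l m hij hik hil hjk hjl hkl with h | h | h | h <;> simp [← h])).symm
  rw [huniv, Finset.sum_insert (by simp [hij, hik, hil]),
    Finset.sum_insert (by simp [hjk, hjl]), Finset.sum_insert (by simp [hkl]),
    Finset.sum_singleton]
  ring

lemma mrg_lin (i j : Fin 4) (a b : ℝ) (x y : Fin 4 → ℝ) :
    mrg i j (a • x + b • y) = a • mrg i j x + b • mrg i j y := by
  funext m
  by_cases h : m = i ∨ m = j <;> simp only [mrg, h, if_true, if_false, Pi.add_apply,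
    Pi.smul_apply, smul_eq_mul] <;> ring

lemma mrg_smul (i j : Fin 4) (a : ℝ) (x : Fin 4 → ℝ) :
    mrg i j (a • x) = a • mrg i j x := by
  funext m
  by_cases h : m = i ∨ m = j <;> simp only [mrg, h, if_true, if_false, Pi.smul_apply,
    smul_eq_mul] <;> ring

lemma mrg_sum (i j : Fin 4) (hij : i ≠ j) (x : Fin 4 → ℝ) :
    ∑ m, mrg i j x m = ∑ m, x m := by
  obtain ⟨k, l, hik, hil, hjk, hjl, hkl⟩ := complete2 i j hij
  rw [sum_four (mrg i j x) i j k l hij hik hil hjk hjl hkl,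
    sum_four x i j k l hij hik hil hjk hjl hkl,
    mrg_left, mrg_right, mrg_other x (Ne.symm hik) (Ne.symm hjk),
    mrg_other x (Ne.symm hil) (Ne.symm hjl)]
  ring

lemma mrg_ones (i j : Fin 4) : mrg i j (1 : Fin 4 → ℝ) = 1 := by
  funext m
  by_cases h : m = i ∨ m = j <;> simp only [mrg, h, if_true, if_false, Pi.one_apply] <;> norm_num

lemma gossipM_mulVec (i j : Fin 4) (hij : i ≠ j) (x : Fin 4 → ℝ) :
    (gossipM 4 i j).mulVec x = mrg i j x := by
  funext m
  simp only [gossipM, mrg, Matrix.mulVec, Matrix.sub_apply, Matrix.smul_apply,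
    Matrix.one_apply, vecMulVec_apply, dotProduct, Pi.sub_apply, Pi.single_apply,
    Fin.sum_univ_four]
  fin_cases m <;> fin_cases i <;> fin_cases j <;> simp_all <;> ring

def SINV (x : Fin 4 → ℝ) : Prop :=
  ∃ i j k l : Fin 4, i ≠ j ∧ i ≠ k ∧ i ≠ l ∧ j ≠ k ∧ j ≠ l ∧ k ≠ l ∧
  ∃ t : ℝ, t ≠ 0 ∧
   ((x i = t ∧ x j = t ∧ x k = -t ∧ x l = -t) ∨
    (x i = t ∧ x j = -t ∧ x k = 0 ∧ x l = 0) ∨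
    (∃ a b c : ℤ, Odd a ∧ 4 ∣ c ∧ 2*a + 2*b + c = 0 ∧
      x i = t*(a:ℝ) ∧ x j = t*(a:ℝ) ∧ x k = t*(2*(b:ℝ)) ∧ x l = t*(c:ℝ)))

lemma SINV_mrg (p q : Fin 4) (hpq : p ≠ q) (x : Fin 4 → ℝ) (hx : SINV x) :
    SINV (mrg p q x) ∨ mrg p q x = 0 := by
  obtain ⟨i, j, k, l, hij, hik, hil, hjk, hjl, hkl, t, ht, hsh⟩ := hx
  rcases cover4 i j k l p hij hik hil hjk hjl hkl with rfl | rfl | rfl | rfl <;>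
    rcases cover4 i j k l q hij hik hil hjk hjl hkl with rfl | rfl | rfl | rfl
  · exact absurd rfl hpq
  · rcases hsh with ⟨h1, h2, h3, h4⟩ | ⟨h1, h2, h3, h4⟩ | ⟨a, b, c, ha, hc4, hsum, h1, h2, h3, h4⟩
    · exact Or.inl ⟨i, j, k, l, hij, hik, hil, hjk, hjl, hkl, t, ht, Or.inl ⟨(by rw [mrg_left, h1, h2]; ring), (by rw [mrg_right, h2, h1]; ring), (by rw [mrg_other x hik.symm hjk.symm]; exact h3), (by rw [mrg_other x hil.symm hjl.symm]; exact h4)⟩⟩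
    · refine Or.inr (funext fun m => ?_)
      rcases cover4 i j k l m hij hik hil hjk hjl hkl with rfl | rfl | rfl | rfl
      · simp only [Pi.zero_apply, mrg_left, h1, h2]; ring
      · simp only [Pi.zero_apply, mrg_right, h1, h2]; ring
      · simp only [Pi.zero_apply]; rw [mrg_other x hik.symm hjk.symm]; exact h3
      · simp only [Pi.zero_apply]; rw [mrg_other x hil.symm hjl.symm]; exact h4
    · exact Or.inl ⟨i, j, k, l, hij, hik, hil, hjk, hjl, hkl, t, ht, Or.inr (Or.inr ⟨a, b, c, ha, hc4, hsum, (by rw [mrg_left, h1, h2]; push_cast; ring), (by rw [mrg_right, h2, h1]; push_cast; ring), (by rw [mrg_other x hik.symm hjk.symm]; exact h3), (by rw [mrg_other x hil.symm hjl.symm]; exact h4)⟩)⟩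
  · rcases hsh with ⟨h1, h2, h3, h4⟩ | ⟨h1, h2, h3, h4⟩ | ⟨a, b, c, ha, hc4, hsum, h1, h2, h3, h4⟩
    · exact Or.inl ⟨j, l, i, k, hjl, hij.symm, hjk, hil.symm, hkl.symm, hik, t, ht, Or.inr (Or.inl ⟨(by rw [mrg_other x hij.symm hjk]; exact h2), (by rw [mrg_other x hil.symm hkl.symm]; exact h4), (by rw [mrg_left, h1, h3]; ring), (by rw [mrg_right, h1, h3]; ring)⟩)⟩
    · exact Or.inl ⟨i, k, j, l, hik, hij, hil, hjk.symm, hkl, hjl, t/2, (by intro h; apply ht; linarith), Or.inr (Or.inr ⟨1, -1, 0, ⟨0, by ring⟩, ⟨0, by ring⟩, by ring, (by rw [mrg_left, h1, h3]; push_cast; ring), (by rw [mrg_right, h1, h3]; push_cast; ring), (by rw [mrg_other x hij.symm hjk, h2]; push_cast; ring), (by rw [mrg_other x hil.symm hkl.symm, h4]; push_cast; ring)⟩)⟩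
    · exact Or.inl ⟨i, k, j, l, hik, hij, hil, hjk.symm, hkl, hjl, t/2, (div_ne_zero ht two_ne_zero), Or.inr (Or.inr ⟨a + 2*b, a, 2*c, (ha.add_even (even_two_mul b)), (by obtain ⟨g, hg⟩ := hc4; exact ⟨2*g, by omega⟩), (by omega), (by rw [mrg_left, h1, h3]; push_cast; ring), (by rw [mrg_right, h1, h3]; push_cast; ring), (by rw [mrg_other x hij.symm hjk, h2]; push_cast; ring), (by rw [mrg_other x hil.symm hkl.symm, h4]; push_cast; ring)⟩)⟩
  · rcases hsh with ⟨h1, h2, h3, h4⟩ | ⟨h1, h2, h3, h4⟩ | ⟨a, b, c, ha, hc4, hsum, h1, h2, h3, h4⟩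
    · exact Or.inl ⟨j, k, i, l, hjk, hij.symm, hjl, hik.symm, hkl, hil, t, ht, Or.inr (Or.inl ⟨(by rw [mrg_other x hij.symm hjl]; exact h2), (by rw [mrg_other x hik.symm hkl]; exact h3), (by rw [mrg_left, h1, h4]; ring), (by rw [mrg_right, h1, h4]; ring)⟩)⟩
    · exact Or.inl ⟨i, l, j, k, hil, hij, hik, hjl.symm, hkl.symm, hjk, t/2, (by intro h; apply ht; linarith), Or.inr (Or.inr ⟨1, -1, 0, ⟨0, by ring⟩, ⟨0, by ring⟩, by ring, (by rw [mrg_left, h1, h4]; push_cast; ring), (by rw [mrg_right, h1, h4]; push_cast; ring), (by rw [mrg_other x hij.symm hjl, h2]; push_cast; ring), (by rw [mrg_other x hik.symm hkl, h3]; push_cast; ring)⟩)⟩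
    · exact Or.inl ⟨i, l, j, k, hil, hij, hik, hjl.symm, hkl.symm, hjk, t/2, (div_ne_zero ht two_ne_zero), Or.inr (Or.inr ⟨a + c, a, 4*b, (ha.add_even (by obtain ⟨g, hg⟩ := hc4; exact ⟨2*g, by omega⟩)), ⟨b, rfl⟩, (by omega), (by rw [mrg_left, h1, h4]; push_cast; ring), (by rw [mrg_right, h1, h4]; push_cast; ring), (by rw [mrg_other x hij.symm hjl, h2]; push_cast; ring), (by rw [mrg_other x hik.symm hkl, h3]; push_cast; ring)⟩)⟩
  · rcases hsh with ⟨h1, h2, h3, h4⟩ | ⟨h1, h2, h3, h4⟩ | ⟨a, b, c, ha, hc4, hsum, h1, h2, h3, h4⟩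
    · exact Or.inl ⟨i, j, k, l, hij, hik, hil, hjk, hjl, hkl, t, ht, Or.inl ⟨(by rw [mrg_right, h1, h2]; ring), (by rw [mrg_left, h2, h1]; ring), (by rw [mrg_other x hjk.symm hik.symm]; exact h3), (by rw [mrg_other x hjl.symm hil.symm]; exact h4)⟩⟩
    · refine Or.inr (funext fun m => ?_)
      rcases cover4 i j k l m hij hik hil hjk hjl hkl with rfl | rfl | rfl | rfl
      · simp only [Pi.zero_apply, mrg_right, h1, h2]; ring
      · simp only [Pi.zero_apply, mrg_left, h1, h2]; ring
      · simp only [Pi.zero_apply]; rw [mrg_other x hjk.symm hik.symm]; exact h3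
      · simp only [Pi.zero_apply]; rw [mrg_other x hjl.symm hil.symm]; exact h4
    · exact Or.inl ⟨i, j, k, l, hij, hik, hil, hjk, hjl, hkl, t, ht, Or.inr (Or.inr ⟨a, b, c, ha, hc4, hsum, (by rw [mrg_right, h1, h2]; push_cast; ring), (by rw [mrg_left, h2, h1]; push_cast; ring), (by rw [mrg_other x hjk.symm hik.symm]; exact h3), (by rw [mrg_other x hjl.symm hil.symm]; exact h4)⟩)⟩
  · exact absurd rfl hpq
  · rcases hsh with ⟨h1, h2, h3, h4⟩ | ⟨h1, h2, h3, h4⟩ | ⟨a, b, c, ha, hc4, hsum, h1, h2, h3, h4⟩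
    · exact Or.inl ⟨i, l, j, k, hil, hij, hik, hjl.symm, hkl.symm, hjk, t, ht, Or.inr (Or.inl ⟨(by rw [mrg_other x hij hik]; exact h1), (by rw [mrg_other x hjl.symm hkl.symm]; exact h4), (by rw [mrg_left, h2, h3]; ring), (by rw [mrg_right, h2, h3]; ring)⟩)⟩
    · exact Or.inl ⟨j, k, i, l, hjk, hij.symm, hjl, hik.symm, hkl, hil, -t/2, (by intro h; apply ht; linarith), Or.inr (Or.inr ⟨1, -1, 0, ⟨0, by ring⟩, ⟨0, by ring⟩, by ring, (by rw [mrg_left, h2, h3]; push_cast; ring), (by rw [mrg_right, h2, h3]; push_cast; ring), (by rw [mrg_other x hij hik, h1]; push_cast; ring), (by rw [mrg_other x hjl.symm hkl.symm, h4]; push_cast; ring)⟩)⟩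
    · exact Or.inl ⟨j, k, i, l, hjk, hij.symm, hjl, hik.symm, hkl, hil, t/2, (div_ne_zero ht two_ne_zero), Or.inr (Or.inr ⟨a + 2*b, a, 2*c, (ha.add_even (even_two_mul b)), (by obtain ⟨g, hg⟩ := hc4; exact ⟨2*g, by omega⟩), (by omega), (by rw [mrg_left, h2, h3]; push_cast; ring), (by rw [mrg_right, h2, h3]; push_cast; ring), (by rw [mrg_other x hij hik, h1]; push_cast; ring), (by rw [mrg_other x hjl.symm hkl.symm, h4]; push_cast; ring)⟩)⟩
  · rcases hsh with ⟨h1, h2, h3, h4⟩ | ⟨h1, h2, h3, h4⟩ | ⟨a, b, c, ha, hc4, hsum, h1, h2, h3, h4⟩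
    · exact Or.inl ⟨i, k, j, l, hik, hij, hil, hjk.symm, hkl, hjl, t, ht, Or.inr (Or.inl ⟨(by rw [mrg_other x hij hil]; exact h1), (by rw [mrg_other x hjk.symm hkl]; exact h3), (by rw [mrg_left, h2, h4]; ring), (by rw [mrg_right, h2, h4]; ring)⟩)⟩
    · exact Or.inl ⟨j, l, i, k, hjl, hij.symm, hjk, hil.symm, hkl.symm, hik, -t/2, (by intro h; apply ht; linarith), Or.inr (Or.inr ⟨1, -1, 0, ⟨0, by ring⟩, ⟨0, by ring⟩, by ring, (by rw [mrg_left, h2, h4]; push_cast; ring), (by rw [mrg_right, h2, h4]; push_cast; ring), (by rw [mrg_other x hij hil, h1]; push_cast; ring), (by rw [mrg_other x hjk.symm hkl, h3]; push_cast; ring)⟩)⟩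
    · exact Or.inl ⟨j, l, i, k, hjl, hij.symm, hjk, hil.symm, hkl.symm, hik, t/2, (div_ne_zero ht two_ne_zero), Or.inr (Or.inr ⟨a + c, a, 4*b, (ha.add_even (by obtain ⟨g, hg⟩ := hc4; exact ⟨2*g, by omega⟩)), ⟨b, rfl⟩, (by omega), (by rw [mrg_left, h2, h4]; push_cast; ring), (by rw [mrg_right, h2, h4]; push_cast; ring), (by rw [mrg_other x hij hil, h1]; push_cast; ring), (by rw [mrg_other x hjk.symm hkl, h3]; push_cast; ring)⟩)⟩
  · rcases hsh with ⟨h1, h2, h3, h4⟩ | ⟨h1, h2, h3, h4⟩ | ⟨a, b, c, ha, hc4, hsum, h1, h2, h3, h4⟩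
    · exact Or.inl ⟨j, l, i, k, hjl, hij.symm, hjk, hil.symm, hkl.symm, hik, t, ht, Or.inr (Or.inl ⟨(by rw [mrg_other x hjk hij.symm]; exact h2), (by rw [mrg_other x hkl.symm hil.symm]; exact h4), (by rw [mrg_right, h3, h1]; ring), (by rw [mrg_left, h3, h1]; ring)⟩)⟩
    · exact Or.inl ⟨i, k, j, l, hik, hij, hil, hjk.symm, hkl, hjl, t/2, (by intro h; apply ht; linarith), Or.inr (Or.inr ⟨1, -1, 0, ⟨0, by ring⟩, ⟨0, by ring⟩, by ring, (by rw [mrg_right, h3, h1]; push_cast; ring), (by rw [mrg_left, h3, h1]; push_cast; ring), (by rw [mrg_other x hjk hij.symm, h2]; push_cast; ring), (by rw [mrg_other x hkl.symm hil.symm, h4]; push_cast; ring)⟩)⟩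
    · exact Or.inl ⟨i, k, j, l, hik, hij, hil, hjk.symm, hkl, hjl, t/2, (div_ne_zero ht two_ne_zero), Or.inr (Or.inr ⟨a + 2*b, a, 2*c, (ha.add_even (even_two_mul b)), (by obtain ⟨g, hg⟩ := hc4; exact ⟨2*g, by omega⟩), (by omega), (by rw [mrg_right, h3, h1]; push_cast; ring), (by rw [mrg_left, h3, h1]; push_cast; ring), (by rw [mrg_other x hjk hij.symm, h2]; push_cast; ring), (by rw [mrg_other x hkl.symm hil.symm, h4]; push_cast; ring)⟩)⟩
  · rcases hsh with ⟨h1, h2, h3, h4⟩ | ⟨h1, h2, h3, h4⟩ | ⟨a, b, c, ha, hc4, hsum, h1, h2, h3, h4⟩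
    · exact Or.inl ⟨i, l, j, k, hil, hij, hik, hjl.symm, hkl.symm, hjk, t, ht, Or.inr (Or.inl ⟨(by rw [mrg_other x hik hij]; exact h1), (by rw [mrg_other x hkl.symm hjl.symm]; exact h4), (by rw [mrg_right, h3, h2]; ring), (by rw [mrg_left, h3, h2]; ring)⟩)⟩
    · exact Or.inl ⟨j, k, i, l, hjk, hij.symm, hjl, hik.symm, hkl, hil, -t/2, (by intro h; apply ht; linarith), Or.inr (Or.inr ⟨1, -1, 0, ⟨0, by ring⟩, ⟨0, by ring⟩, by ring, (by rw [mrg_right, h3, h2]; push_cast; ring), (by rw [mrg_left, h3, h2]; push_cast; ring), (by rw [mrg_other x hik hij, h1]; push_cast; ring), (by rw [mrg_other x hkl.symm hjl.symm, h4]; push_cast; ring)⟩)⟩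
    · exact Or.inl ⟨j, k, i, l, hjk, hij.symm, hjl, hik.symm, hkl, hil, t/2, (div_ne_zero ht two_ne_zero), Or.inr (Or.inr ⟨a + 2*b, a, 2*c, (ha.add_even (even_two_mul b)), (by obtain ⟨g, hg⟩ := hc4; exact ⟨2*g, by omega⟩), (by omega), (by rw [mrg_right, h3, h2]; push_cast; ring), (by rw [mrg_left, h3, h2]; push_cast; ring), (by rw [mrg_other x hik hij, h1]; push_cast; ring), (by rw [mrg_other x hkl.symm hjl.symm, h4]; push_cast; ring)⟩)⟩
  · exact absurd rfl hpq
  · rcases hsh with ⟨h1, h2, h3, h4⟩ | ⟨h1, h2, h3, h4⟩ | ⟨a, b, c, ha, hc4, hsum, h1, h2, h3, h4⟩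
    · exact Or.inl ⟨i, j, k, l, hij, hik, hil, hjk, hjl, hkl, t, ht, Or.inl ⟨(by rw [mrg_other x hik hil]; exact h1), (by rw [mrg_other x hjk hjl]; exact h2), (by rw [mrg_left, h3, h4]; ring), (by rw [mrg_right, h4, h3]; ring)⟩⟩
    · exact Or.inl ⟨i, j, k, l, hij, hik, hil, hjk, hjl, hkl, t, ht, Or.inr (Or.inl ⟨(by rw [mrg_other x hik hil]; exact h1), (by rw [mrg_other x hjk hjl]; exact h2), (by rw [mrg_left, h3, h4]; ring), (by rw [mrg_right, h4, h3]; ring)⟩)⟩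
    · have hsumR : 2*(a:ℝ) + 2*(b:ℝ) + (c:ℝ) = 0 := by exact_mod_cast congrArg (Int.cast : ℤ → ℝ) hsum
      have hane : t * (a:ℝ) ≠ 0 := mul_ne_zero ht (Int.cast_ne_zero.mpr (by rcases ha with ⟨m, hm⟩; omega))
      exact Or.inl ⟨i, j, k, l, hij, hik, hil, hjk, hjl, hkl, t * (a:ℝ), hane, Or.inl ⟨(by rw [mrg_other x hik hil]; exact h1), (by rw [mrg_other x hjk hjl]; exact h2), (by rw [mrg_left, h3, h4]; push_cast; push_cast at hsumR; linear_combination (t/2) * hsumR), (by rw [mrg_right, h3, h4]; push_cast; push_cast at hsumR; linear_combination (t/2) * hsumR)⟩⟩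
  · rcases hsh with ⟨h1, h2, h3, h4⟩ | ⟨h1, h2, h3, h4⟩ | ⟨a, b, c, ha, hc4, hsum, h1, h2, h3, h4⟩
    · exact Or.inl ⟨j, k, i, l, hjk, hij.symm, hjl, hik.symm, hkl, hil, t, ht, Or.inr (Or.inl ⟨(by rw [mrg_other x hjl hij.symm]; exact h2), (by rw [mrg_other x hkl hik.symm]; exact h3), (by rw [mrg_right, h4, h1]; ring), (by rw [mrg_left, h4, h1]; ring)⟩)⟩
    · exact Or.inl ⟨i, l, j, k, hil, hij, hik, hjl.symm, hkl.symm, hjk, t/2, (by intro h; apply ht; linarith), Or.inr (Or.inr ⟨1, -1, 0, ⟨0, by ring⟩, ⟨0, by ring⟩, by ring, (by rw [mrg_right, h4, h1]; push_cast; ring), (by rw [mrg_left, h4, h1]; push_cast; ring), (by rw [mrg_other x hjl hij.symm, h2]; push_cast; ring), (by rw [mrg_other x hkl hik.symm, h3]; push_cast; ring)⟩)⟩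
    · exact Or.inl ⟨i, l, j, k, hil, hij, hik, hjl.symm, hkl.symm, hjk, t/2, (div_ne_zero ht two_ne_zero), Or.inr (Or.inr ⟨a + c, a, 4*b, (ha.add_even (by obtain ⟨g, hg⟩ := hc4; exact ⟨2*g, by omega⟩)), ⟨b, rfl⟩, (by omega), (by rw [mrg_right, h4, h1]; push_cast; ring), (by rw [mrg_left, h4, h1]; push_cast; ring), (by rw [mrg_other x hjl hij.symm, h2]; push_cast; ring), (by rw [mrg_other x hkl hik.symm, h3]; push_cast; ring)⟩)⟩
  · rcases hsh with ⟨h1, h2, h3, h4⟩ | ⟨h1, h2, h3, h4⟩ | ⟨a, b, c, ha, hc4, hsum, h1, h2, h3, h4⟩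
    · exact Or.inl ⟨i, k, j, l, hik, hij, hil, hjk.symm, hkl, hjl, t, ht, Or.inr (Or.inl ⟨(by rw [mrg_other x hil hij]; exact h1), (by rw [mrg_other x hkl hjk.symm]; exact h3), (by rw [mrg_right, h4, h2]; ring), (by rw [mrg_left, h4, h2]; ring)⟩)⟩
    · exact Or.inl ⟨j, l, i, k, hjl, hij.symm, hjk, hil.symm, hkl.symm, hik, -t/2, (by intro h; apply ht; linarith), Or.inr (Or.inr ⟨1, -1, 0, ⟨0, by ring⟩, ⟨0, by ring⟩, by ring, (by rw [mrg_right, h4, h2]; push_cast; ring), (by rw [mrg_left, h4, h2]; push_cast; ring), (by rw [mrg_other x hil hij, h1]; push_cast; ring), (by rw [mrg_other x hkl hjk.symm, h3]; push_cast; ring)⟩)⟩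
    · exact Or.inl ⟨j, l, i, k, hjl, hij.symm, hjk, hil.symm, hkl.symm, hik, t/2, (div_ne_zero ht two_ne_zero), Or.inr (Or.inr ⟨a + c, a, 4*b, (ha.add_even (by obtain ⟨g, hg⟩ := hc4; exact ⟨2*g, by omega⟩)), ⟨b, rfl⟩, (by omega), (by rw [mrg_right, h4, h2]; push_cast; ring), (by rw [mrg_left, h4, h2]; push_cast; ring), (by rw [mrg_other x hil hij, h1]; push_cast; ring), (by rw [mrg_other x hkl hjk.symm, h3]; push_cast; ring)⟩)⟩
  · rcases hsh with ⟨h1, h2, h3, h4⟩ | ⟨h1, h2, h3, h4⟩ | ⟨a, b, c, ha, hc4, hsum, h1, h2, h3, h4⟩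
    · exact Or.inl ⟨i, j, k, l, hij, hik, hil, hjk, hjl, hkl, t, ht, Or.inl ⟨(by rw [mrg_other x hil hik]; exact h1), (by rw [mrg_other x hjl hjk]; exact h2), (by rw [mrg_right, h3, h4]; ring), (by rw [mrg_left, h4, h3]; ring)⟩⟩
    · exact Or.inl ⟨i, j, k, l, hij, hik, hil, hjk, hjl, hkl, t, ht, Or.inr (Or.inl ⟨(by rw [mrg_other x hil hik]; exact h1), (by rw [mrg_other x hjl hjk]; exact h2), (by rw [mrg_right, h3, h4]; ring), (by rw [mrg_left, h4, h3]; ring)⟩)⟩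
    · have hsumR : 2*(a:ℝ) + 2*(b:ℝ) + (c:ℝ) = 0 := by exact_mod_cast congrArg (Int.cast : ℤ → ℝ) hsum
      have hane : t * (a:ℝ) ≠ 0 := mul_ne_zero ht (Int.cast_ne_zero.mpr (by rcases ha with ⟨m, hm⟩; omega))
      exact Or.inl ⟨i, j, k, l, hij, hik, hil, hjk, hjl, hkl, t * (a:ℝ), hane, Or.inl ⟨(by rw [mrg_other x hil hik]; exact h1), (by rw [mrg_other x hjl hjk]; exact h2), (by rw [mrg_right, h3, h4]; push_cast; push_cast at hsumR; linear_combination (t/2) * hsumR), (by rw [mrg_left, h3, h4]; push_cast; push_cast at hsumR; linear_combination (t/2) * hsumR)⟩⟩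
  · exact absurd rfl hpq

lemma SINV_not_three (d : Fin 4) (μ : ℝ) (hμ : μ ≠ 0) (s : Fin 4 → ℝ)
    (hsd : s d = -3*μ) (hso : ∀ m, m ≠ d → s m = μ) : ¬ SINV s := by
  rintro ⟨i, j, k, l, hij, hik, hil, hjk, hjl, hkl, t, ht, hsh⟩
  rcases cover4 i j k l d hij hik hil hjk hjl hkl with rfl | rfl | rfl | rfl <;>
    rcases hsh with ⟨h1, h2, h3, h4⟩ | ⟨h1, h2, h3, h4⟩ | ⟨a, b, c, ha, hc4, hsum, h1, h2, h3, h4⟩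
  -- d = i
  · rw [hso j (Ne.symm hij)] at h2; rw [hso k (Ne.symm hik)] at h3
    exact hμ (by linarith)
  · rw [hso k (Ne.symm hik)] at h3; exact hμ (by linarith)
  · rw [hsd] at h1; rw [hso j (Ne.symm hij)] at h2; exact hμ (by linarith)
  -- d = j
  · rw [hso i hij] at h1; rw [hso k (Ne.symm hjk)] at h3
    exact hμ (by linarith)
  · rw [hso k (Ne.symm hjk)] at h3; exact hμ (by linarith)
  · rw [hsd] at h2; rw [hso i hij] at h1; exact hμ (by linarith)
  -- d = k
  · rw [hso i hik] at h1; rw [hso l (Ne.symm hkl)] at h4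
    exact hμ (by linarith)
  · rw [hso l (Ne.symm hkl)] at h4; exact hμ (by linarith)
  · rw [hso i hik] at h1; rw [hso l (Ne.symm hkl)] at h4
    have hac : (a : ℝ) = (c : ℝ) := mul_left_cancel₀ ht (by linarith)
    have hac' : a = c := by exact_mod_cast hac
    obtain ⟨g, hg⟩ := hc4; rcases ha with ⟨m, hm⟩; omega
  -- d = l
  · rw [hso i hil] at h1; rw [hso k hkl] at h3
    exact hμ (by linarith)
  · rw [hso i hil] at h1; rw [hso j hjl] at h2; exact hμ (by linarith)
  · rw [hso i hil] at h1; rw [hso k hkl] at h3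
    have hac : (a : ℝ) = 2*(b : ℝ) := mul_left_cancel₀ ht (by linarith)
    have hac' : a = 2*b := by exact_mod_cast hac
    rcases ha with ⟨m, hm⟩; omega

def sum0 (u : Fin 4 → ℝ) : Prop := ∑ m, u m = 0

def Indep (y z : Fin 4 → ℝ) : Prop := ∀ α β : ℝ, α • y + β • z = 0 → α = 0 ∧ β = 0

def matInv (Ψ : Matrix (Fin 4) (Fin 4) ℝ) : Prop :=
  Ψ = 1 ∨
  (∃ i₀ j₀ : Fin 4, i₀ ≠ j₀ ∧ (∀ u, sum0 u → Ψ.mulVec u i₀ = Ψ.mulVec u j₀) ∧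
    ∃ u₁ u₂, sum0 u₁ ∧ sum0 u₂ ∧ Indep (Ψ.mulVec u₁) (Ψ.mulVec u₂)) ∨
  (∃ x, SINV x ∧ ∀ u, sum0 u → ∃ r : ℝ, Ψ.mulVec u = r • x)

lemma SINV_std : SINV ![1, 1, -1, -1] := by
  refine ⟨0, 1, 2, 3, by decide, by decide, by decide, by decide, by decide, by decide,
    1, one_ne_zero, Or.inl ⟨rfl, rfl, rfl, rfl⟩⟩

lemma matInv_step (Ψ : Matrix (Fin 4) (Fin 4) ℝ)
    (hsum : ∀ u, ∑ m, Ψ.mulVec u m = ∑ m, u m)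
    (hinv : matInv Ψ) (p q : Fin 4) (hpq : p ≠ q) : matInv (gossipM 4 p q * Ψ) := by
  have key : ∀ u, (gossipM 4 p q * Ψ).mulVec u = mrg p q (Ψ.mulVec u) := fun u => by
    rw [← Matrix.mulVec_mulVec, gossipM_mulVec p q hpq]
  rcases hinv with rfl | ⟨i₀, j₀, hne, hperp, u₁, u₂, hs1, hs2, hind⟩ | ⟨x, hx, hline⟩
  · -- Ψ = 1
    obtain ⟨k, l, hpk, hpl, hqk, hql, hkl⟩ := complete2 p q hpq
    refine Or.inr (Or.inl ⟨p, q, hpq, ?_, ?_⟩)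
    · intro u _
      rw [key, mrg_left, mrg_right]
    · refine ⟨(fun m => if m = k then 1 else if m = l then -1 else 0),
        (fun m => if m = p then 1 else if m = k then -1 else 0), ?_, ?_, ?_⟩
      · show sum0 _
        unfold sum0
        rw [sum_four _ p q k l hpq hpk hpl hqk hql hkl]
        simp [hpq, hpk, hpl, hqk, hql, hkl, Ne.symm hpq, Ne.symm hpk, Ne.symm hpl, Ne.symm hqk, Ne.symm hql, Ne.symm hkl]
      · show sum0 _
        unfold sum0
        rw [sum_four _ p q k l hpq hpk hpl hqk hql hkl]
        simp [hpq, hpk, hpl, hqk, hql, hkl, Ne.symm hpq, Ne.symm hpk, Ne.symm hpl, Ne.symm hqk, Ne.symm hql, Ne.symm hkl]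
      · intro α β h
        rw [key, key, Matrix.one_mulVec, Matrix.one_mulVec] at h
        have h1 := congr_fun h k
        have h2 := congr_fun h q
        simp [mrg, hpq, hpk, hpl, hqk, hql, hkl, Ne.symm hpq, Ne.symm hpk, Ne.symm hpl,
          Ne.symm hqk, Ne.symm hql, Ne.symm hkl] at h1 h2
        constructor <;> linarith
  · by_cases hover : p = i₀ ∨ p = j₀ ∨ q = i₀ ∨ q = j₀
    · refine Or.inr (Or.inl ⟨p, q, hpq, fun u _ => by rw [key, mrg_left, mrg_right],
        u₁, u₂, hs1, hs2, ?_⟩)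
      intro α β h
      rw [key, key, ← mrg_lin] at h
      set w : Fin 4 → ℝ := α • Ψ.mulVec u₁ + β • Ψ.mulVec u₂ with hwdef
      have hwij : w i₀ = w j₀ := by
        simp only [hwdef, Pi.add_apply, Pi.smul_apply, smul_eq_mul]
        rw [hperp u₁ hs1, hperp u₂ hs2]
      have hother : ∀ m, m ≠ p → m ≠ q → w m = 0 := by
        intro m h1 h2
        have hm := congr_fun h m
        rw [mrg_other w h1 h2] at hm
        simpa using hm
      have hps : w p + w q = 0 := by
        have hm := congr_fun h p
        rw [mrg_left] at hm
        simp at hm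
        linarith
      have hw0 : w p = 0 ∧ w q = 0 := by
        rcases hover with h' | h' | h' | h'
        · by_cases hq : q = j₀
          · have e1 : w p = w q := by rw [h', hq]; exact hwij
            constructor <;> linarith
          · have hj : w j₀ = 0 :=
              hother j₀ (by rw [h']; exact Ne.symm hne) (fun hh => hq hh.symm)
            have e1 : w p = 0 := by rw [h', ← hj]; exact hwij
            constructor <;> linarith
        · by_cases hq : q = i₀
          · have e1 : w p = w q := by rw [h', hq]; exact hwij.symm
            constructor <;> linarith
          · have hi : w i₀ = 0 := hother i₀ (by rw [h']; exact hne) (fun hh => hq hh.symm)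
            have e1 : w p = 0 := by rw [h', ← hi]; exact hwij.symm
            constructor <;> linarith
        · by_cases hp' : p = j₀
          · have e1 : w q = w p := by rw [h', hp']; exact hwij
            constructor <;> linarith
          · have hj : w j₀ = 0 :=
              hother j₀ (fun hh => hp' hh.symm) (by rw [h']; exact Ne.symm hne)
            have e1 : w q = 0 := by rw [h', ← hj]; exact hwij
            constructor <;> linarith
        · by_cases hp' : p = i₀
          · have e1 : w q = w p := by rw [h', hp']; exact hwij.symm
            constructor <;> linarith
          · have hi : w i₀ = 0 := hother i₀ (fun hh => hp' hh.symm) (by rw [h']; exact hne)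
            have e1 : w q = 0 := by rw [h', ← hi]; exact hwij.symm
            constructor <;> linarith
      have hw : w = 0 := by
        funext m
        by_cases hmp : m = p
        · rw [hmp]; simpa using hw0.1
        · by_cases hmq : m = q
          · rw [hmq]; simpa using hw0.2
          · simpa using hother m hmp hmq
      exact hind α β (by rw [← hwdef]; exact hw)
    · push_neg at hover
      obtain ⟨hpi, hpj, hqi, hqj⟩ := hover
      refine Or.inr (Or.inr ⟨(fun m => if m = i₀ ∨ m = j₀ then (1:ℝ) else -1), ?_, ?_⟩)
      · refine ⟨i₀, j₀, p, q, hne, Ne.symm hpi, Ne.symm hqi, Ne.symm hpj, Ne.symm hqj, hpq,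
          1, one_ne_zero, Or.inl ⟨?_, ?_, ?_, ?_⟩⟩ <;> simp [hpi, hpj, hqi, hqj]
      · intro u hu
        refine ⟨Ψ.mulVec u i₀, ?_⟩
        rw [key]
        have h0 : ∑ m, Ψ.mulVec u m = 0 := by rw [hsum u]; exact hu
        rw [sum_four (Ψ.mulVec u) i₀ j₀ p q hne (Ne.symm hpi) (Ne.symm hqi)
          (Ne.symm hpj) (Ne.symm hqj) hpq] at h0
        have hpe := hperp u hu
        funext m
        rcases cover4 i₀ j₀ p q m hne (Ne.symm hpi) (Ne.symm hqi) (Ne.symm hpj)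
          (Ne.symm hqj) hpq with rfl | rfl | rfl | rfl
        · rw [mrg_other _ (Ne.symm hpi) (Ne.symm hqi)]
          simp
        · rw [mrg_other _ (Ne.symm hpj) (Ne.symm hqj)]
          simp [Ne.symm hne]
          linarith
        · rw [mrg_left]
          simp [hpi, hpj]
          linarith
        · rw [mrg_right]
          simp [hqi, hqj]
          linarith
  · -- line case
    rcases SINV_mrg p q hpq x hx with hS | h0
    · refine Or.inr (Or.inr ⟨mrg p q x, hS, fun u hu => ?_⟩)
      obtain ⟨r, hr⟩ := hline u hu
      exact ⟨r, by rw [key, hr, mrg_smul]⟩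
    · refine Or.inr (Or.inr ⟨![1, 1, -1, -1], SINV_std, fun u hu => ⟨0, ?_⟩⟩)
      obtain ⟨r, hr⟩ := hline u hu
      rw [key, hr, mrg_smul, h0]
      simp


lemma exists4 : ∀ a b c : Fin 4, a ≠ b → a ≠ c → b ≠ c →
    ∃ d, a ≠ d ∧ b ≠ d ∧ c ≠ d := by decide

theorem stmt_7 (P : ℕ → Matrix (Fin 4) (Fin 4) ℝ)
    (hmem : ∀ k, ∃ i j, i ≠ j ∧ P k = gossipM 4 i j)
    (hconsec : ∀ k, P k ≠ P (k + 1)) :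
    ¬ ∃ h : ℕ, 1 ≤ h ∧
      (Set.range fun i => ((List.range h).map P).reverse.prod i).ncard = 2 ∧
      ∃ a b c : Fin 4, a ≠ b ∧ a ≠ c ∧ b ≠ c ∧
        ((List.range h).map P).reverse.prod a = ((List.range h).map P).reverse.prod b ∧
        ((List.range h).map P).reverse.prod a = ((List.range h).map P).reverse.prod c := by
  rintro ⟨h, hh1, hcard, a, b, c, hab, hac, hbc, hrab, hrac⟩
  set Ψ := ((List.range h).map P).reverse.prod with hΨdef
  have main : ∀ n : ℕ,
      (∀ u, ∑ m, (((List.range n).map P).reverse.prod).mulVec u m = ∑ m, u m) ∧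
      ((((List.range n).map P).reverse.prod).mulVec 1 = 1) ∧
      matInv (((List.range n).map P).reverse.prod) := by
    intro n
    induction n with
    | zero =>
      simp only [List.range_zero, List.map_nil, List.reverse_nil, List.prod_nil]
      exact ⟨fun u => by rw [Matrix.one_mulVec], by rw [Matrix.one_mulVec], Or.inl rfl⟩
    | succ n ih =>
      obtain ⟨i, j, hij, hP⟩ := hmem n
      have hstep : ((List.range (n+1)).map P).reverse.prod
          = gossipM 4 i j * ((List.range n).map P).reverse.prod := by
        rw [List.range_succ, List.map_append, List.reverse_append]
        simp [hP]
      rw [hstep]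
      refine ⟨?_, ?_, matInv_step _ ih.1 ih.2.2 i j hij⟩
      · intro u
        rw [← Matrix.mulVec_mulVec, gossipM_mulVec i j hij, mrg_sum i j hij, ih.1]
      · rw [← Matrix.mulVec_mulVec, ih.2.1, gossipM_mulVec i j hij, mrg_ones]
  obtain ⟨hsum, hones, hinv⟩ := main h
  rw [← hΨdef] at hsum hones hinv
  obtain ⟨d, hda, hdb, hdc⟩ := exists4 a b c hab hac hbc
  have hrowd : Ψ d ≠ Ψ a := by
    intro hEq
    have hall : ∀ m, Ψ m = Ψ a := by
      intro m
      rcases cover4 a b c d m hab hac hda hbc hdb hdc with rfl | rfl | rfl | rfl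
      · rfl
      · exact hrab.symm
      · exact hrac.symm
      · exact hEq
    have hsing : (Set.range fun i => Ψ i) = {Ψ a} := by
      ext y
      constructor
      · rintro ⟨m, rfl⟩
        exact hall m
      · rintro rfl
        exact ⟨a, rfl⟩
    rw [hsing, Set.ncard_singleton] at hcard
    norm_num at hcard
  set s₀ : Fin 4 → ℝ := fun m => if m = d then (-3:ℝ) else 1 with hs₀
  have hform : ∀ u, sum0 u → Ψ.mulVec u = (Ψ.mulVec u a) • s₀ := by
    intro u hu
    have h0 : ∑ m, Ψ.mulVec u m = 0 := by rw [hsum u]; exact hu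
    rw [sum_four (Ψ.mulVec u) a b c d hab hac hda hbc hdb hdc] at h0
    have hb : Ψ.mulVec u b = Ψ.mulVec u a := by
      show Ψ b ⬝ᵥ u = Ψ a ⬝ᵥ u
      rw [← hrab]
    have hc : Ψ.mulVec u c = Ψ.mulVec u a := by
      show Ψ c ⬝ᵥ u = Ψ a ⬝ᵥ u
      rw [← hrac]
    funext m
    rcases cover4 a b c d m hab hac hda hbc hdb hdc with rfl | rfl | rfl | rfl
    · simp [hs₀, hda]
    · simp only [Pi.smul_apply, hs₀, smul_eq_mul]
      rw [hb]
      simp [hdb]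
    · simp only [Pi.smul_apply, hs₀, smul_eq_mul]
      rw [hc]
      simp [hdc]
    · simp only [Pi.smul_apply, hs₀, smul_eq_mul, if_pos rfl, if_true]
      linarith
  rcases hinv with hI | ⟨i₀, j₀, hne, hperp, u₁, u₂, hu1, hu2, hind⟩ | ⟨x, hx, hline⟩
  · rw [hI] at hrab
    have hcontra := congr_fun hrab a
    simp [Matrix.one_apply, Ne.symm hab] at hcontra
  · have e1 := hform u₁ hu1
    have e2 := hform u₂ hu2
    have hz : (Ψ.mulVec u₂ a) • Ψ.mulVec u₁ + (-(Ψ.mulVec u₁ a)) • Ψ.mulVec u₂ = 0 := by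
      rw [e1, e2]
      funext m
      simp only [Pi.add_apply, Pi.smul_apply, smul_eq_mul, Pi.zero_apply]
      ring
    obtain ⟨hz2, hz1⟩ := hind _ _ hz
    have hy1 : Ψ.mulVec u₁ = 0 := by
      rw [e1, show Ψ.mulVec u₁ a = 0 from by linarith [neg_eq_zero.mp hz1]]
      simp
    obtain ⟨h10, _⟩ := hind 1 0 (by rw [hy1]; simp)
    exact one_ne_zero h10
  · obtain ⟨τ, hτ⟩ : ∃ τ, Ψ d τ ≠ Ψ a τ := by
      by_contra hcon
      push_neg at hcon
      exact hrowd (funext hcon)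
    set u : Fin 4 → ℝ := fun m => (if m = τ then 1 else 0) - 1/4 with hudef
    have hu : sum0 u := by
      unfold sum0
      simp only [hudef, Finset.sum_sub_distrib, Finset.sum_ite_eq', Finset.mem_univ,
        if_true, Finset.sum_const, Finset.card_univ, Fintype.card_fin, nsmul_eq_mul]
      norm_num
    have hval : ∀ e : Fin 4, Ψ.mulVec u e = Ψ e τ - 1/4 := by
      intro e
      have hrows : ∑ n, Ψ e n = 1 := by
        have hh := congr_fun hones e
        simpa [Matrix.mulVec, dotProduct] using hh
      show ∑ n, Ψ e n * u n = _
      simp only [hudef, mul_sub, Finset.sum_sub_distrib, mul_ite, mul_one, mul_zero]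
      rw [Finset.sum_ite_eq' Finset.univ τ (fun n => Ψ e n)]
      rw [show ∑ n, Ψ e n * (1/4) = (∑ n, Ψ e n) * (1/4) from (Finset.sum_mul ..).symm]
      rw [hrows]
      simp
    have hformu := hform u hu
    have hαd : Ψ.mulVec u d = -3 * (Ψ.mulVec u a) := by
      have hh := congr_fun hformu d
      simp only [Pi.smul_apply, hs₀, smul_eq_mul, if_pos rfl, if_true] at hh
      linarith
    have hαne : Ψ.mulVec u a ≠ 0 := by
      intro h0
      apply hτ
      have l1 := hval a
      have l2 := hval d
      rw [h0] at l1
      rw [hαd, h0] at l2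
      
      linarith
    obtain ⟨r, hr⟩ := hline u hu
    have hrne : r ≠ 0 := by
      intro h0
      rw [h0, zero_smul] at hr
      exact hαne (by rw [hr]; rfl)
    have hxd : x d = -3 * ((Ψ.mulVec u a) / r) := by
      have hh := congr_fun hr d
      simp only [Pi.smul_apply, smul_eq_mul] at hh
      rw [hαd] at hh
      field_simp
      linarith
    have hxo : ∀ m, m ≠ d → x m = (Ψ.mulVec u a) / r := by
      intro m hm
      have h1 := congr_fun hr m
      have h2 := congr_fun hformu m
      simp only [Pi.smul_apply, smul_eq_mul] at h1 h2
      rw [hs₀] at h2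
      simp only [hm, if_false] at h2
      rw [h1] at h2
      field_simp
      linarith
    exact SINV_not_three d ((Ψ.mulVec u a) / r) (div_ne_zero hαne hrne) x hxd hxo hx
end
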